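/- arXiv:2004.09881 — 3 statements merged into one kernel-verified Lean document; each statement's English description precedes it below -/
import Mathlib

section
/- For every polynomial function P : [0,1]^q → ℝ of total degree at most β* and all x, y ∈ [0,1]^q, one has |P(x) − P(y)| ≤ 4 √q (β*)² · ‖x − y‖_∞ · sup_{t ∈ [0,1]^q} |P(t)|. -/
open MeasureTheory

section aux
open Polynomial Real Finset


lemma twoStep {Q : ℕ → Prop} (h0 : Q 0) (h1 : Q 1)
    (hs : ∀ n, Q n → Q (n+1) → Q (n+2)) : ∀ n, Q n := by
  have H : ∀ n, Q n ∧ Q (n+1) := by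
    intro n
    induction n with
    | zero => exact ⟨h0, h1⟩
    | succ k ih => exact ⟨ih.2, hs k ih.1 ih.2⟩
  exact fun n => (H n).1

lemma natDegree_T_le : ∀ n : ℕ, (Polynomial.Chebyshev.T ℝ n).natDegree ≤ n := by
  apply twoStep
  · simp [Polynomial.Chebyshev.T_zero]
  · simp [Polynomial.Chebyshev.T_one]
  · intro n h1 h2
    have e : Polynomial.Chebyshev.T ℝ ((n:ℤ)+2) = 2 * X * Polynomial.Chebyshev.T ℝ ((n:ℤ)+1)
        - Polynomial.Chebyshev.T ℝ n := Polynomial.Chebyshev.T_add_two ℝ n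
    push_cast at h2 ⊢
    rw [e]
    apply le_trans (natDegree_sub_le _ _)
    simp only [max_le_iff]
    refine ⟨le_trans natDegree_mul_le ?_, by omega⟩
    have h3 : ((2:ℝ[X]) * X).natDegree ≤ 1 := le_trans natDegree_mul_le (by simp)
    omega

lemma U_eval_one : ∀ n : ℕ, (Polynomial.Chebyshev.U ℝ n).eval 1 = n + 1 := by
  apply twoStep
  · simp [Polynomial.Chebyshev.U_zero]
  · norm_num [Polynomial.Chebyshev.U_one]
  · intro n h1 h2
    have e : Polynomial.Chebyshev.U ℝ ((n:ℤ)+2) = 2 * X * Polynomial.Chebyshev.U ℝ ((n:ℤ)+1)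
        - Polynomial.Chebyshev.U ℝ n := Polynomial.Chebyshev.U_add_two ℝ n
    push_cast at h2 ⊢
    rw [e]
    simp [h1, h2]
    ring

lemma T_deriv_one (d : ℕ) (hd : 1 ≤ d) :
    (Polynomial.derivative (Polynomial.Chebyshev.T ℝ d)).eval 1 = (d:ℝ)^2 := by
  rw [Polynomial.Chebyshev.T_derivative_eq_U]
  have : ((d:ℤ) - 1) = ((d - 1 : ℕ) : ℤ) := by omega
  rw [this]
  rw [Polynomial.eval_mul]
  rw [U_eval_one (d-1)]
  have hc : ((d-1:ℕ):ℝ) + 1 = (d:ℝ) := by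
    have : (1:ℕ) ≤ d := hd
    push_cast [Nat.cast_sub this]
    ring
  rw [hc]
  simp
  ring


noncomputable def nd (d : ℕ) : Fin (d+1) → ℝ := fun k => Real.cos (k * π / d)

lemma nd_mem (d : ℕ) (hd : 1 ≤ d) (k : Fin (d+1)) : (k * π / d : ℝ) ∈ Set.Icc 0 π := by
  have hπ := Real.pi_pos
  have hk : (k:ℝ) ≤ d := by exact_mod_cast Nat.lt_succ_iff.mp k.isLt
  have hd' : (0:ℝ) < d := by exact_mod_cast hd
  constructor
  · positivity
  · rw [div_le_iff₀ hd']
    nlinarith [k.2, hπ]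

lemma nd_anti (d : ℕ) (hd : 1 ≤ d) : ∀ {j k : Fin (d+1)}, j < k → nd d k < nd d j := by
  intro j k hjk
  have hd' : (0:ℝ) < d := by exact_mod_cast hd
  have hπ := Real.pi_pos
  apply Real.strictAntiOn_cos (nd_mem d hd j) (nd_mem d hd k)
  have hjk' : (j:ℝ) < (k:ℝ) := by exact_mod_cast hjk
  apply div_lt_div_of_pos_right ?_ hd'
  nlinarith

lemma nd_inj (d : ℕ) (hd : 1 ≤ d) :
    Set.InjOn (nd d) ((Finset.univ : Finset (Fin (d+1))) : Set (Fin (d+1))) := by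
  intro j _ k _ h
  by_contra hne
  rcases lt_or_gt_of_ne hne with h1 | h1
  · exact absurd h (ne_of_gt (nd_anti d hd h1))
  · exact absurd h (ne_of_lt (nd_anti d hd h1))

lemma nd_le_one (d : ℕ) (k : Fin (d+1)) : nd d k ≤ 1 := Real.cos_le_one _
lemma nd_mem_Icc (d : ℕ) (k : Fin (d+1)) : nd d k ∈ Set.Icc (-1:ℝ) 1 :=
  ⟨Real.neg_one_le_cos _, Real.cos_le_one _⟩

noncomputable def Lk (d : ℕ) (k : Fin (d+1)) : ℝ :=
  (Polynomial.derivative (Lagrange.basis Finset.univ (nd d) k)).eval 1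

lemma basis_decomp (d : ℕ) (k : Fin (d+1)) :
    Lagrange.basis Finset.univ (nd d) k
      = C ((∏ j ∈ Finset.univ.erase k, (nd d k - nd d j))⁻¹)
        * ∏ j ∈ Finset.univ.erase k, (X - C (nd d j)) := by
  rw [Lagrange.basis, ← Finset.prod_inv_distrib, map_prod, ← Finset.prod_mul_distrib]
  apply Finset.prod_congr rfl
  intro j _
  rw [Lagrange.basisDivisor]

lemma prod_deriv_nonneg {ι : Type*} [DecidableEq ι] (s : Finset ι) (v : ι → ℝ)
    (hv : ∀ j ∈ s, v j ≤ 1) :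
    0 ≤ Polynomial.eval 1 (∏ j ∈ s, (X - C (v j)))
    ∧ 0 ≤ Polynomial.eval 1 (Polynomial.derivative (∏ j ∈ s, (X - C (v j)))) := by
  induction s using Finset.induction with
  | empty => simp
  | @insert i s' hni ih =>
    have h1 : v i ≤ 1 := hv i (Finset.mem_insert_self i s')
    have ih' := ih (fun j hj => hv j (Finset.mem_insert_of_mem hj))
    rw [Finset.prod_insert hni]
    constructor
    · rw [Polynomial.eval_mul]
      have : Polynomial.eval 1 (X - C (v i)) = 1 - v i := by simp
      rw [this]
      exact mul_nonneg (by linarith) ih'.1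
    · rw [Polynomial.derivative_mul, Polynomial.eval_add, Polynomial.eval_mul,
        Polynomial.eval_mul]
      simp only [Polynomial.derivative_sub, Polynomial.derivative_X, Polynomial.derivative_C,
        sub_zero, Polynomial.eval_one, Polynomial.eval_sub, Polynomial.eval_X,
        Polynomial.eval_C, one_mul]
      have := ih'.1
      have := ih'.2
      nlinarith

lemma Lk_eq (d : ℕ) (k : Fin (d+1)) :
    Lk d k = (∏ j ∈ Finset.univ.erase k, (nd d k - nd d j))⁻¹
      * Polynomial.eval 1 (Polynomial.derivative
          (∏ j ∈ Finset.univ.erase k, (X - C (nd d j)))) := by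
  rw [Lk, basis_decomp, derivative_C_mul, Polynomial.eval_mul, Polynomial.eval_C]

lemma W_sign (d : ℕ) (hd : 1 ≤ d) (k : Fin (d+1)) :
    0 < (-1:ℝ)^(k:ℕ) * ∏ j ∈ Finset.univ.erase k, (nd d k - nd d j) := by
  classical
  have hsplit := Finset.prod_filter_mul_prod_filter_not (Finset.univ.erase k)
    (fun j => j < k) (fun j => nd d k - nd d j)
  rw [← hsplit]
  have hA : (Finset.univ.erase k).filter (fun j => j < k) = Finset.Iio k := by
    ext j; simp [Finset.mem_Iio, Finset.mem_erase, ne_of_lt, and_comm]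
    intro h; exact ne_of_lt h
  have hAcard : ((Finset.univ.erase k).filter (fun j => j < k)).card = (k:ℕ) := by
    rw [hA, Fin.card_Iio]
  have e1 : ∏ j ∈ (Finset.univ.erase k).filter (fun j => j < k), (nd d k - nd d j)
      = (-1:ℝ)^(k:ℕ) * ∏ j ∈ (Finset.univ.erase k).filter (fun j => j < k), (nd d j - nd d k) := by
    rw [← hAcard, ← Finset.prod_const (-1:ℝ), ← Finset.prod_mul_distrib]
    apply Finset.prod_congr rfl
    intro j _; ring
  rw [e1]
  have h2 : 0 < ∏ j ∈ (Finset.univ.erase k).filter (fun j => j < k), (nd d j - nd d k) := by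
    apply Finset.prod_pos
    intro j hj
    rw [Finset.mem_filter] at hj
    have := nd_anti d hd hj.2
    linarith
  have h3 : 0 < ∏ j ∈ (Finset.univ.erase k).filter (fun j => ¬ j < k), (nd d k - nd d j) := by
    apply Finset.prod_pos
    intro j hj
    rw [Finset.mem_filter, Finset.mem_erase] at hj
    have hkj : k < j := lt_of_le_of_ne (not_lt.mp hj.2) (Ne.symm hj.1.1)
    have := nd_anti d hd hkj
    linarith
  have h4 : ((-1:ℝ)^(k:ℕ))^2 = 1 := by
    rw [← pow_mul, mul_comm, pow_mul]; simp
  have e2 : (-1:ℝ)^(k:ℕ) * (((-1:ℝ)^(k:ℕ) * ∏ j ∈ (Finset.univ.erase k).filter (fun j => j < k), (nd d j - nd d k)) * ∏ j ∈ (Finset.univ.erase k).filter (fun j => ¬ j < k), (nd d k - nd d j))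
      = ((-1:ℝ)^(k:ℕ))^2 * ((∏ j ∈ (Finset.univ.erase k).filter (fun j => j < k), (nd d j - nd d k)) * ∏ j ∈ (Finset.univ.erase k).filter (fun j => ¬ j < k), (nd d k - nd d j)) := by
    ring
  rw [e2, h4, one_mul]
  exact mul_pos h2 h3

lemma Lk_sign (d : ℕ) (hd : 1 ≤ d) (k : Fin (d+1)) :
    0 ≤ (-1:ℝ)^(k:ℕ) * Lk d k := by
  rw [Lk_eq]
  have hD := (prod_deriv_nonneg (Finset.univ.erase k) (nd d)
    (fun j _ => nd_le_one d j)).2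
  have hW := W_sign d hd k
  rw [← mul_assoc]
  apply mul_nonneg _ hD
  have e : (-1:ℝ)^(k:ℕ) * (∏ j ∈ Finset.univ.erase k, (nd d k - nd d j))⁻¹
      = ((-1:ℝ)^(k:ℕ) * ∏ j ∈ Finset.univ.erase k, (nd d k - nd d j))⁻¹ := by
    rw [mul_inv, ← inv_pow, inv_neg, inv_one]
  rw [e]
  exact le_of_lt (inv_pos.mpr hW)

lemma T_eval_nd (d : ℕ) (hd : 1 ≤ d) (k : Fin (d+1)) :
    (Polynomial.Chebyshev.T ℝ d).eval (nd d k) = (-1:ℝ)^(k:ℕ) := by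
  have hd' : (d:ℝ) ≠ 0 := by positivity
  rw [nd]
  rw [Polynomial.Chebyshev.T_real_cos]
  have e : ((d:ℤ):ℝ) * ((k:ℝ) * π / d) = (k:ℕ) * π := by
    push_cast
    field_simp
  rw [e]
  have := Real.cos_nat_mul_pi_sub (0:ℝ) (k:ℕ)
  simpa using this

lemma interp_eq (d : ℕ) (hd : 1 ≤ d) (r : ℝ[X]) (hdeg : r.natDegree ≤ d) :
    r = Lagrange.interpolate Finset.univ (nd d) (fun k => r.eval (nd d k)) := by
  apply Lagrange.eq_interpolate (nd_inj d hd)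
  rw [Finset.card_univ, Fintype.card_fin]
  calc r.degree ≤ (r.natDegree : WithBot ℕ) := Polynomial.degree_le_natDegree
    _ < ((d+1 : ℕ) : WithBot ℕ) := by exact_mod_cast Nat.lt_succ_of_le hdeg

lemma deriv_interp_eval (d : ℕ) (f : Fin (d+1) → ℝ) :
    (Polynomial.derivative (Lagrange.interpolate Finset.univ (nd d) f)).eval 1
      = ∑ k, f k * Lk d k := by
  rw [Lagrange.interpolate_apply, map_sum, Polynomial.eval_finset_sum]
  apply Finset.sum_congr rfl
  intro k _
  rw [Polynomial.derivative_C_mul, Polynomial.eval_mul, Polynomial.eval_C, Lk]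

lemma sum_Lk (d : ℕ) (hd : 1 ≤ d) :
    ∑ k : Fin (d+1), (-1:ℝ)^(k:ℕ) * Lk d k = (d:ℝ)^2 := by
  have hT : Polynomial.Chebyshev.T ℝ d
      = Lagrange.interpolate Finset.univ (nd d) (fun k => (-1:ℝ)^(k:ℕ)) := by
    have := interp_eq d hd (Polynomial.Chebyshev.T ℝ d) (natDegree_T_le d)
    rw [this]
    apply Lagrange.interpolate_eq_of_values_eq_on
    intro k _
    exact T_eval_nd d hd k
  have := T_deriv_one d hd
  rw [hT, deriv_interp_eval] at this
  exact this

lemma markov_pm (d : ℕ) (hd : 1 ≤ d) (r : ℝ[X]) (hdeg : r.natDegree ≤ d) (M : ℝ)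
    (hb : ∀ t ∈ Set.Icc (-1:ℝ) 1, |r.eval t| ≤ M) :
    |(Polynomial.derivative r).eval 1| ≤ (d:ℝ)^2 * M := by
  have habs : ∀ k : Fin (d+1), |Lk d k| = (-1:ℝ)^(k:ℕ) * Lk d k := by
    intro k
    have h1 := Lk_sign d hd k
    rcases le_or_gt 0 (Lk d k) with h | h
    · rw [abs_of_nonneg h]
      rcases Nat.even_or_odd (k:ℕ) with he | ho
      · rw [he.neg_one_pow, one_mul]
      · rw [ho.neg_one_pow] at h1 ⊢
        nlinarith
    · rw [abs_of_neg h]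
      rcases Nat.even_or_odd (k:ℕ) with he | ho
      · rw [he.neg_one_pow, one_mul] at h1; linarith
      · rw [ho.neg_one_pow]; ring
  have hr := interp_eq d hd r hdeg
  have he : (Polynomial.derivative r).eval 1 = ∑ k, r.eval (nd d k) * Lk d k := by
    conv_lhs => rw [hr]
    exact deriv_interp_eval d _
  rw [he]
  calc |∑ k, r.eval (nd d k) * Lk d k| ≤ ∑ k, |r.eval (nd d k) * Lk d k| :=
        Finset.abs_sum_le_sum_abs _ _
    _ ≤ ∑ k : Fin (d+1), M * |Lk d k| := by
        apply Finset.sum_le_sum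
        intro k _
        rw [abs_mul]
        apply mul_le_mul_of_nonneg_right (hb _ (nd_mem_Icc d k)) (abs_nonneg _)
    _ = M * ∑ k : Fin (d+1), (-1:ℝ)^(k:ℕ) * Lk d k := by
        rw [Finset.mul_sum]
        apply Finset.sum_congr rfl
        intro k _
        rw [habs k]
    _ = (d:ℝ)^2 * M := by rw [sum_Lk d hd]; ring

lemma markov01 (d : ℕ) (p : ℝ[X]) (hdeg : p.natDegree ≤ d) (M : ℝ)
    (hb : ∀ t ∈ Set.Icc (0:ℝ) 1, |p.eval t| ≤ M) :
    |(Polynomial.derivative p).eval 0| ≤ 2 * (d:ℝ)^2 * M := by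
  rcases Nat.eq_zero_or_pos d with h0 | hd
  · subst h0
    rw [Polynomial.eq_C_of_natDegree_le_zero hdeg]
    simp
  · set g : ℝ[X] := C (2⁻¹ : ℝ) - C 2⁻¹ * X with hg
    set r : ℝ[X] := p.comp g with hr
    have hgdeg : g.natDegree ≤ 1 := by
      apply le_trans (Polynomial.natDegree_sub_le _ _)
      simp only [max_le_iff, Polynomial.natDegree_C]
      exact ⟨by omega, le_trans (Polynomial.natDegree_mul_le)
        (by simp [Polynomial.natDegree_C, Polynomial.natDegree_X])⟩
    have hrdeg : r.natDegree ≤ d := by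
      apply le_trans (Polynomial.natDegree_comp_le)
      calc p.natDegree * g.natDegree ≤ d * 1 := Nat.mul_le_mul hdeg hgdeg
        _ = d := by omega
    have hgev : ∀ t : ℝ, g.eval t = (1 - t) / 2 := by
      intro t; simp [hg]; ring
    have hrb : ∀ t ∈ Set.Icc (-1:ℝ) 1, |r.eval t| ≤ M := by
      intro t ht
      rw [hr, Polynomial.eval_comp, hgev]
      apply hb
      constructor <;> [skip; skip] <;>
        · rcases ht with ⟨h1, h2⟩
          first
          | linarith
          | linarith
    have key := markov_pm d hd r hrdeg M hrb
    have hderiv : (Polynomial.derivative r).eval 1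
        = -(2⁻¹ : ℝ) * (Polynomial.derivative p).eval 0 := by
      rw [hr, Polynomial.derivative_comp, Polynomial.eval_mul, Polynomial.eval_comp, hgev]
      have : Polynomial.derivative g = - C (2⁻¹:ℝ) := by
        rw [hg]; simp [Polynomial.derivative_sub]
      rw [this]
      norm_num
    rw [hderiv] at key
    rw [abs_mul] at key
    have : |(-(2⁻¹:ℝ))| = 2⁻¹ := by norm_num
    rw [this] at key
    linarith


noncomputable def lineComp {q : ℕ} (a v : Fin q → ℝ) (P : MvPolynomial (Fin q) ℝ) : ℝ[X] :=
  MvPolynomial.aeval (fun i => Polynomial.C (a i) + Polynomial.C (v i) * Polynomial.X) P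

lemma eval_lineComp {q : ℕ} (a v : Fin q → ℝ) (P : MvPolynomial (Fin q) ℝ) (s : ℝ) :
    (lineComp a v P).eval s = MvPolynomial.eval (fun i => a i + v i * s) P := by
  induction P using MvPolynomial.induction_on with
  | C r => simp [lineComp]
  | add p q' hp hq => simp [lineComp, map_add] at hp hq ⊢; rw [hp, hq]
  | mul_X p j hp => simp only [lineComp, map_mul, MvPolynomial.aeval_X, MvPolynomial.eval_mul, MvPolynomial.eval_X, Polynomial.eval_mul, Polynomial.eval_add, Polynomial.eval_C, Polynomial.eval_X] at hp ⊢; rw [hp]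

lemma natDegree_lineComp {q : ℕ} (a v : Fin q → ℝ) (P : MvPolynomial (Fin q) ℝ) :
    (lineComp a v P).natDegree ≤ P.totalDegree := by
  have hf : ∀ i : Fin q, (Polynomial.C (a i) + Polynomial.C (v i) * Polynomial.X).natDegree ≤ 1 := by
    intro i
    apply le_trans (Polynomial.natDegree_add_le _ _)
    simp only [max_le_iff, Polynomial.natDegree_C]
    exact ⟨by omega, le_trans Polynomial.natDegree_mul_le (by simp)⟩
  rw [lineComp]
  conv_lhs => rw [← MvPolynomial.support_sum_monomial_coeff P]
  rw [map_sum]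
  apply Polynomial.natDegree_sum_le_of_forall_le
  intro α hα
  rw [MvPolynomial.aeval_monomial]
  apply le_trans Polynomial.natDegree_mul_le
  have h1 : (algebraMap ℝ ℝ[X] (MvPolynomial.coeff α P)).natDegree = 0 := by
    simp [Polynomial.algebraMap_eq]
  rw [h1, zero_add]
  have h2 : (α.prod fun i k => (Polynomial.C (a i) + Polynomial.C (v i) * Polynomial.X) ^ k).natDegree
      ≤ ∑ i ∈ α.support, α i := by
    rw [Finsupp.prod]
    apply le_trans (Polynomial.natDegree_prod_le _ _)
    apply Finset.sum_le_sum
    intro i _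
    apply le_trans (Polynomial.natDegree_pow_le)
    calc α i * (Polynomial.C (a i) + Polynomial.C (v i) * Polynomial.X).natDegree
        ≤ α i * 1 := Nat.mul_le_mul_left _ (hf i)
      _ = α i := by omega
  apply le_trans h2
  have := MvPolynomial.le_totalDegree hα
  rw [Finsupp.sum] at this
  exact this

lemma deriv_lineComp {q : ℕ} (a v : Fin q → ℝ) (P : MvPolynomial (Fin q) ℝ) (s : ℝ) :
    (Polynomial.derivative (lineComp a v P)).eval s
      = ∑ i, v i * MvPolynomial.eval (fun i => a i + v i * s) (MvPolynomial.pderiv i P) := by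
  induction P using MvPolynomial.induction_on with
  | C r => simp [lineComp]
  | add p q' hp hq =>
      simp only [lineComp, map_add, Polynomial.derivative_add, Polynomial.eval_add] at hp hq ⊢
      rw [hp, hq, ← Finset.sum_add_distrib]
      apply Finset.sum_congr rfl
      intro i _
      ring
  | mul_X p j hp =>
      simp only [lineComp, map_mul, MvPolynomial.aeval_X, Polynomial.derivative_mul,
        Polynomial.eval_add, Polynomial.eval_mul] at hp ⊢
      rw [hp]
      have hev := eval_lineComp a v p s
      rw [lineComp] at hev
      rw [hev]
      simp only [MvPolynomial.pderiv_mul, MvPolynomial.pderiv_X, map_add, map_mul]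
      simp only [Polynomial.derivative_add, Polynomial.derivative_C,
        Polynomial.derivative_mul, Polynomial.derivative_X, Polynomial.eval_add,
        Polynomial.eval_mul, Polynomial.eval_C, Polynomial.eval_X, zero_add, mul_one, zero_mul]
      simp only [MvPolynomial.eval_X]
      have hsingle : ∀ x : Fin q,
          (MvPolynomial.eval fun i => a i + v i * s) (Pi.single (M := fun _ : Fin q => MvPolynomial (Fin q) ℝ) x 1 j)
            = if x = j then 1 else 0 := by
        intro x
        rcases eq_or_ne x j with h | h
        · subst h; simp
        · rw [Pi.single_eq_of_ne (Ne.symm h)]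
          simp [h]
      have hcong : ∀ x ∈ Finset.univ, v x *
            ((MvPolynomial.eval fun i => a i + v i * s) ((MvPolynomial.pderiv x) p) * (a j + v j * s) +
              (MvPolynomial.eval fun i => a i + v i * s) p *
                (MvPolynomial.eval fun i => a i + v i * s) (Pi.single (M := fun _ : Fin q => MvPolynomial (Fin q) ℝ) x 1 j))
          = v x * (MvPolynomial.eval fun i => a i + v i * s) ((MvPolynomial.pderiv x) p) * (a j + v j * s)
            + (if x = j then v x * (MvPolynomial.eval fun i => a i + v i * s) p else 0) := by
        intro x _
        rw [hsingle]
        split <;> ring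
      rw [Finset.sum_congr rfl hcong, Finset.sum_add_distrib, Finset.sum_ite_eq' Finset.univ j]
      simp only [Finset.mem_univ, if_true]
      rw [Finset.sum_mul]
      ring_nf
      have hf : (fun i => s * v i + a i) = (fun i => a i + v i * s) := by funext i; ring
      rw [hf]
      congr 1
      exact Finset.sum_congr rfl (fun x _ => by ring)

lemma seg_mem {q : ℕ} {t z : Fin q → ℝ} (ht : t ∈ Set.Icc (0 : Fin q → ℝ) 1)
    (hz : z ∈ Set.Icc (0 : Fin q → ℝ) 1) {s : ℝ} (hs : s ∈ Set.Icc (0:ℝ) 1) :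
    (fun i => t i + (z i - t i) * s) ∈ Set.Icc (0 : Fin q → ℝ) 1 := by
  rcases ht with ⟨ht0, ht1⟩
  rcases hz with ⟨hz0, hz1⟩
  constructor <;> intro i <;>
    [ (have h1 := ht0 i; have h2 := hz0 i);
      (have h1 := ht1 i; have h2 := hz1 i) ] <;>
    simp only [Pi.zero_apply, Pi.one_apply] at h1 h2 ⊢ <;>
    nlinarith [hs.1, hs.2, (ht0 i : (0:ℝ) ≤ t i), (ht1 i : t i ≤ 1),
      (hz0 i : (0:ℝ) ≤ z i), (hz1 i : z i ≤ 1)]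

-- directional derivative bound at a point, toward another cube point
lemma dir_bound {q βs : ℕ} {P : MvPolynomial (Fin q) ℝ} (hP : P.totalDegree ≤ βs)
    {M : ℝ} (hub : ∀ u ∈ Set.Icc (0 : Fin q → ℝ) 1, |MvPolynomial.eval u P| ≤ M)
    {t z : Fin q → ℝ} (ht : t ∈ Set.Icc (0 : Fin q → ℝ) 1)
    (hz : z ∈ Set.Icc (0 : Fin q → ℝ) 1) :
    |∑ i, (z i - t i) * MvPolynomial.eval t (MvPolynomial.pderiv i P)|
      ≤ 2 * (βs:ℝ)^2 * M := by
  have key := markov01 βs (lineComp t (fun i => z i - t i) P)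
    (le_trans (natDegree_lineComp _ _ _) hP) M ?_
  · rw [deriv_lineComp] at key
    have : (fun i => t i + (z i - t i) * 0) = t := by funext i; ring
    rw [this] at key
    exact key
  · intro s hs
    rw [eval_lineComp]
    exact hub _ (seg_mem ht hz hs)

lemma grad_l1_bound {q βs : ℕ} {P : MvPolynomial (Fin q) ℝ} (hP : P.totalDegree ≤ βs)
    {M : ℝ} (hub : ∀ u ∈ Set.Icc (0 : Fin q → ℝ) 1, |MvPolynomial.eval u P| ≤ M)
    {t : Fin q → ℝ} (ht : t ∈ Set.Icc (0 : Fin q → ℝ) 1) :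
    ∑ i, |MvPolynomial.eval t (MvPolynomial.pderiv i P)| ≤ 4 * (βs:ℝ)^2 * M := by
  set g : Fin q → ℝ := fun i => MvPolynomial.eval t (MvPolynomial.pderiv i P) with hg
  set zp : Fin q → ℝ := fun i => if 0 ≤ g i then 1 else 0 with hzp
  set zm : Fin q → ℝ := fun i => if 0 ≤ g i then 0 else 1 with hzm
  have hzpm : zp ∈ Set.Icc (0 : Fin q → ℝ) 1 := by
    constructor <;> intro i <;> simp only [hzp, Pi.zero_apply, Pi.one_apply] <;> split <;> norm_num
  have hzmm : zm ∈ Set.Icc (0 : Fin q → ℝ) 1 := by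
    constructor <;> intro i <;> simp only [hzm, Pi.zero_apply, Pi.one_apply] <;> split <;> norm_num
  have hA := dir_bound hP hub ht hzpm
  have hB := dir_bound hP hub ht hzmm
  have hsum : (∑ i, (zp i - t i) * g i) + (-(∑ i, (zm i - t i) * g i)) = ∑ i, |g i| := by
    rw [← Finset.sum_neg_distrib, ← Finset.sum_add_distrib]
    apply Finset.sum_congr rfl
    intro i _
    simp only [hzp, hzm]
    rcases le_or_gt 0 (g i) with h | h
    · rw [if_pos h, if_pos h, abs_of_nonneg h]; ring
    · rw [if_neg (not_le.mpr h), if_neg (not_le.mpr h), abs_of_neg h]; ring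
  have h1 := abs_le.mp hA
  have h2 := abs_le.mp hB
  linarith [h1.1, h1.2, h2.1, h2.2, hsum]


end aux

section aux2
open Polynomial Real Finset

/-- For every polynomial function `P : [0,1]^q → ℝ` of total degree at most `β*` and all
`x, y ∈ [0,1]^q`, one has
`|P(x) − P(y)| ≤ 4 √q (β*)² ⬝ ‖x − y‖_∞ ⬝ sup_{t ∈ [0,1]^q} |P(t)|`.
(The norm on `Fin q → ℝ` is the maximum norm.) -/
theorem stmt7 (βs q : ℕ) (P : MvPolynomial (Fin q) ℝ) (hP : P.totalDegree ≤ βs)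
    (x y : Fin q → ℝ) (hx : x ∈ Set.Icc (0 : Fin q → ℝ) 1)
    (hy : y ∈ Set.Icc (0 : Fin q → ℝ) 1) :
    |MvPolynomial.eval x P - MvPolynomial.eval y P|
      ≤ 4 * Real.sqrt q * (βs : ℝ) ^ 2 * ‖x - y‖ *
        ⨆ t ∈ Set.Icc (0 : Fin q → ℝ) 1, |MvPolynomial.eval t P| := by
  set M : ℝ := ⨆ t ∈ Set.Icc (0 : Fin q → ℝ) 1, |MvPolynomial.eval t P| with hM
  -- explicit upper bound to get BddAbove
  set B : ℝ := ∑ α ∈ P.support, |MvPolynomial.coeff α P| with hB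
  have hub' : ∀ t ∈ Set.Icc (0 : Fin q → ℝ) 1, |MvPolynomial.eval t P| ≤ B := by
    intro t ht
    rw [MvPolynomial.eval_eq]
    apply le_trans (Finset.abs_sum_le_sum_abs _ _)
    apply Finset.sum_le_sum
    intro α _
    rw [abs_mul]
    have hprod : |∏ i ∈ α.support, t i ^ α i| ≤ 1 := by
      rw [abs_le]
      constructor
      · have : (0:ℝ) ≤ ∏ i ∈ α.support, t i ^ α i :=
          Finset.prod_nonneg fun i _ => pow_nonneg (ht.1 i) _
        linarith
      · apply Finset.prod_le_one
        · intro i _; exact pow_nonneg (ht.1 i) _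
        · intro i _; exact pow_le_one₀ (ht.1 i) (ht.2 i)
    calc |MvPolynomial.coeff α P| * |∏ i ∈ α.support, t i ^ α i|
        ≤ |MvPolynomial.coeff α P| * 1 :=
          mul_le_mul_of_nonneg_left hprod (abs_nonneg _)
      _ = |MvPolynomial.coeff α P| := by ring
  have hbdd : BddAbove (Set.range fun t => ⨆ _ : t ∈ Set.Icc (0 : Fin q → ℝ) 1,
      |MvPolynomial.eval t P|) := by
    refine ⟨max B 0, ?_⟩
    rintro m ⟨t, rfl⟩
    beta_reduce
    by_cases ht : t ∈ Set.Icc (0 : Fin q → ℝ) 1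
    · rw [ciSup_pos ht]
      exact le_max_of_le_left (hub' t ht)
    · haveI : IsEmpty (t ∈ Set.Icc (0 : Fin q → ℝ) 1) := by simpa using ht
      rw [Real.iSup_of_isEmpty]
      exact le_max_right _ _
  have hub : ∀ t ∈ Set.Icc (0 : Fin q → ℝ) 1, |MvPolynomial.eval t P| ≤ M := by
    intro t ht
    rw [hM]
    have := le_ciSup hbdd t
    rwa [ciSup_pos ht] at this
  have h0mem : (0 : Fin q → ℝ) ∈ Set.Icc (0 : Fin q → ℝ) 1 :=
    ⟨le_refl _, fun i => zero_le_one⟩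
  have hM0 : 0 ≤ M := le_trans (abs_nonneg _) (hub 0 h0mem)
  -- main estimate
  set φ := lineComp y (fun i => x i - y i) P with hφ
  have hφ0 : φ.eval 0 = MvPolynomial.eval y P := by
    rw [hφ, eval_lineComp]
    have : (fun i => y i + (x i - y i) * 0) = y := by funext i; ring
    rw [this]
  have hφ1 : φ.eval 1 = MvPolynomial.eval x P := by
    rw [hφ, eval_lineComp]
    have : (fun i => y i + (x i - y i) * 1) = x := by funext i; ring
    rw [this]
  obtain ⟨c, hc, hcd⟩ := exists_hasDerivAt_eq_slope (fun s => φ.eval s)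
    (fun s => (Polynomial.derivative φ).eval s) (by norm_num : (0:ℝ) < 1)
    (Polynomial.continuousOn _) (fun s _ => Polynomial.hasDerivAt φ s)
  rw [hφ0, hφ1] at hcd
  have hcd' : MvPolynomial.eval x P - MvPolynomial.eval y P
      = (Polynomial.derivative φ).eval c := by
    rw [hcd]; ring
  set t : Fin q → ℝ := fun i => y i + (x i - y i) * c with htdef
  have htmem : t ∈ Set.Icc (0 : Fin q → ℝ) 1 :=
    seg_mem hy hx ⟨le_of_lt hc.1, le_of_lt hc.2⟩
  have hderiv : (Polynomial.derivative φ).eval c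
      = ∑ i, (x i - y i) * MvPolynomial.eval t (MvPolynomial.pderiv i P) := by
    rw [hφ, deriv_lineComp]
  have hgb := grad_l1_bound hP hub htmem
  have hstep : |MvPolynomial.eval x P - MvPolynomial.eval y P|
      ≤ ‖x - y‖ * ∑ i, |MvPolynomial.eval t (MvPolynomial.pderiv i P)| := by
    rw [hcd', hderiv]
    apply le_trans (Finset.abs_sum_le_sum_abs _ _)
    rw [Finset.mul_sum]
    apply Finset.sum_le_sum
    intro i _
    rw [abs_mul]
    apply mul_le_mul_of_nonneg_right _ (abs_nonneg _)
    have := norm_le_pi_norm (x - y) i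
    simpa [Real.norm_eq_abs] using this
  rcases Nat.eq_zero_or_pos q with hq | hq
  · subst hq
    have : x = y := funext fun i => i.elim0
    subst this
    simp
  · have hsq : (1:ℝ) ≤ Real.sqrt q := by
      rw [show (1:ℝ) = Real.sqrt 1 by simp]
      apply Real.sqrt_le_sqrt
      exact_mod_cast hq
    calc |MvPolynomial.eval x P - MvPolynomial.eval y P|
        ≤ ‖x - y‖ * ∑ i, |MvPolynomial.eval t (MvPolynomial.pderiv i P)| := hstep
      _ ≤ ‖x - y‖ * (4 * (βs:ℝ)^2 * M) :=
          mul_le_mul_of_nonneg_left hgb (norm_nonneg _)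
      _ = 4 * 1 * (βs:ℝ)^2 * ‖x - y‖ * M := by ring
      _ ≤ 4 * Real.sqrt q * (βs:ℝ)^2 * ‖x - y‖ * M := by
          apply mul_le_mul_of_nonneg_right _ hM0
          apply mul_le_mul_of_nonneg_right _ (norm_nonneg _)
          apply mul_le_mul_of_nonneg_right _ (by positivity)
          nlinarith

end aux2
end

section
/- Let X_1, X_2, … be iid random vectors in [0,1]^q with density f_X bounded and bounded away from zero, let (h_n) be a sequence of positive bandwidths with h_n → 0 and log(n)/(n h_n^q) → 0, and fix d > 0. Then, almost surely, sup over all axis-parallel hypercubes I_n ⊆ [0,1]^q with edge length d h_n of |(1/n) Σ_{i=1}^n 1{X_i ∈ I_n} − P(X_1 ∈ I_n)| = o(h_n^q). Consequently, with probability converging to one, every axis-parallel hypercube I_n ⊆ [0,1]^q with edge length d h_n contains at least d_n design points among X_1,…,X_n, for some sequence d_n of order n h_n^q. -/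
open MeasureTheory ProbabilityTheory Filter Real
open scoped Classical ENNReal
set_option maxHeartbeats 1000000

lemma quad_bound {x : ℝ} (hx : |x| ≤ 1) : exp x - 1 - x ≤ x^2 := by
  have := Real.exp_bound hx (n := 2) (by norm_num)
  have h2 : ∑ m ∈ Finset.range 2, x ^ m / (m.factorial : ℝ) = 1 + x := by
    simp [Finset.sum_range_succ]
  rw [h2] at this
  have h3 : |x| ^ 2 * ((2:ℕ).succ / ((2:ℕ).factorial * (2:ℕ)) : ℝ) = (3/4) * x^2 := by
    rw [sq_abs]; norm_num [Nat.factorial]; ring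
  rw [h3] at this
  have h4 := abs_le.mp this
  nlinarith [sq_nonneg x]

section Bernoulli
variable {Ω : Type*} [MeasurableSpace Ω] (μ : Measure Ω) [IsProbabilityMeasure μ]

lemma mgf_of_zero_one {Z : Ω → ℝ} (hZ : Measurable Z) (h01 : ∀ ω, Z ω = 0 ∨ Z ω = 1) (s : ℝ) :
    mgf Z μ s = 1 + (exp s - 1) * ∫ ω, Z ω ∂μ := by
  have key : ∀ ω, exp (s * Z ω) = 1 + (exp s - 1) * Z ω := by
    intro ω; rcases h01 ω with h | h <;> simp [h]
  have hInt : Integrable Z μ := by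
    refine ⟨hZ.aestronglyMeasurable, ?_⟩
    apply HasFiniteIntegral.of_bounded (C := (1:ℝ))
    filter_upwards with ω; rcases h01 ω with h|h <;> simp [h]
  unfold mgf
  rw [integral_congr_ae (ae_of_all _ key), integral_add (integrable_const 1) (hInt.const_mul _),
    MeasureTheory.integral_const_mul]
  simp

lemma bernoulli_tails (n : ℕ) (Y : ℕ → Ω → ℝ) (hYm : ∀ i, Measurable (Y i))
    (hind : iIndepFun Y μ)
    (h01 : ∀ i ω, Y i ω = 0 ∨ Y i ω = 1)
    (p : ℝ) (hp : ∀ i, ∫ ω, Y i ω ∂μ = p) (hp0 : 0 ≤ p) (hp1 : p ≤ 1)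
    (t s : ℝ) (hs0 : 0 ≤ s) (hs1 : s ≤ 1) :
    (μ {ω | (n:ℝ)*(p + t) ≤ ∑ i ∈ Finset.range n, Y i ω}).toReal
      ≤ exp ((n:ℝ) * (p * s^2 - s * t)) ∧
    (μ {ω | ∑ i ∈ Finset.range n, Y i ω ≤ (n:ℝ)*(p - t)}).toReal
      ≤ exp ((n:ℝ) * (p * s^2 - s * t)) := by
  set S : Ω → ℝ := fun ω => ∑ i ∈ Finset.range n, Y i ω with hS
  have hSmeas : Measurable S := by
    apply Finset.measurable_sum; intro i _; exact hYm i
  have hSrange : ∀ ω, 0 ≤ S ω ∧ S ω ≤ n := by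
    intro ω
    constructor
    · exact Finset.sum_nonneg (fun i _ => by rcases h01 i ω with h|h <;> simp [h])
    · calc S ω ≤ ∑ i ∈ Finset.range n, 1 := by
            exact Finset.sum_le_sum (fun i _ => by rcases h01 i ω with h|h <;> simp [h])
        _ = n := by simp
  have hIntExp : ∀ u : ℝ, Integrable (fun ω => exp (u * S ω)) μ := by
    intro u
    refine ⟨(hSmeas.const_mul u).exp.aestronglyMeasurable, ?_⟩
    apply HasFiniteIntegral.of_bounded (C := exp (|u| * n))
    filter_upwards with ω
    rw [norm_eq_abs, abs_of_pos (exp_pos _)]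
    apply exp_le_exp.2
    calc u * S ω ≤ |u * S ω| := le_abs_self _
      _ = |u| * |S ω| := abs_mul _ _
      _ ≤ |u| * n := by
          apply mul_le_mul_of_nonneg_left _ (abs_nonneg u)
          rw [abs_of_nonneg (hSrange ω).1]; exact (hSrange ω).2
  have hmgfsum : ∀ u : ℝ, mgf S μ u = (1 + (exp u - 1) * p) ^ n := by
    intro u
    have := hind.mgf_sum hYm (Finset.range n) (t := u)
    rw [show S = ∑ i ∈ Finset.range n, Y i from by funext ω; simp [hS, Finset.sum_apply]] at *
    rw [this]
    rw [Finset.prod_congr rfl (fun i _ => by rw [mgf_of_zero_one μ (hYm i) (h01 i) u, hp i])]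
    simp
  have hmgfle : ∀ u : ℝ, -1 ≤ u → mgf S μ u ≤ exp ((n:ℝ) * (p * (exp u - 1))) := by
    intro u hu
    rw [hmgfsum u]
    have h1 : (0:ℝ) ≤ 1 + (exp u - 1) * p := by
      rcases le_or_gt 0 (exp u - 1) with h|h
      · positivity
      · nlinarith [Real.exp_pos u]
    calc (1 + (exp u - 1) * p) ^ n ≤ (exp ((exp u - 1) * p)) ^ n := by
          apply pow_le_pow_left₀ h1
          linarith [Real.add_one_le_exp ((exp u - 1) * p)]
      _ = exp ((n:ℝ) * (p * (exp u - 1))) := by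
          rw [← Real.exp_nat_mul]; ring_nf
  constructor
  · have := measure_ge_le_exp_mul_mgf (μ := μ) (X := S) ((n:ℝ)*(p + t)) hs0 (hIntExp s)
    refine this.trans ?_
    calc exp (-s * ((n:ℝ)*(p+t))) * mgf S μ s
        ≤ exp (-s * ((n:ℝ)*(p+t))) * exp ((n:ℝ) * (p * (exp s - 1))) := by
          apply mul_le_mul_of_nonneg_left (hmgfle s (by linarith)) (le_of_lt (exp_pos _))
      _ = exp ((n:ℝ) * (p * (exp s - 1 - s) - s * t)) := by
          rw [← Real.exp_add]; ring_nf
      _ ≤ exp ((n:ℝ) * (p * s^2 - s * t)) := by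
          apply exp_le_exp.2
          apply mul_le_mul_of_nonneg_left _ (Nat.cast_nonneg n)
          have := quad_bound (x := s) (by rw [abs_of_nonneg hs0]; exact hs1)
          nlinarith
  · have := measure_le_le_exp_mul_mgf (μ := μ) (X := S) ((n:ℝ)*(p - t)) (neg_nonpos.2 hs0) (hIntExp (-s))
    refine this.trans ?_
    calc exp (-(-s) * ((n:ℝ)*(p-t))) * mgf S μ (-s)
        ≤ exp (s * ((n:ℝ)*(p-t))) * exp ((n:ℝ) * (p * (exp (-s) - 1))) := by
          rw [neg_neg]
          apply mul_le_mul_of_nonneg_left (hmgfle (-s) (by linarith)) (le_of_lt (exp_pos _))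
      _ = exp ((n:ℝ) * (p * (exp (-s) - 1 + s) - s * t)) := by
          rw [← Real.exp_add]; ring_nf
      _ ≤ exp ((n:ℝ) * (p * s^2 - s * t)) := by
          apply exp_le_exp.2
          apply mul_le_mul_of_nonneg_left _ (Nat.cast_nonneg n)
          have := quad_bound (x := -s) (by rw [abs_neg, abs_of_nonneg hs0]; exact hs1)
          nlinarith

end Bernoulli




open MeasureTheory ProbabilityTheory Filter
open scoped Classical

/-- Uniform law of large numbers over small cubes.  Let `X₁, X₂, …` be iid random vectors in
`[0,1]^q` with density `f_X` bounded and bounded away from zero, let `(h_n)` be positive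
bandwidths with `h_n → 0` and `log(n)/(n h_n^q) → 0`, and fix `d > 0`.  Then, almost surely,
the supremum over all axis-parallel hypercubes `I_n ⊆ [0,1]^q` with edge length `d h_n` of
`|(1/n) Σ_{i<n} 1{X_i ∈ I_n} − P(X₁ ∈ I_n)|` is `o(h_n^q)`.  Consequently, with probability
converging to one, every such hypercube contains at least `d_n` of the points `X₁,…,X_n`,
for some sequence `d_n` of (exact) order `n h_n^q`. -/
theorem stmt13 {Ω : Type*} [MeasurableSpace Ω] (μ : Measure Ω) [IsProbabilityMeasure μ]
    (q : ℕ) (hq : 0 < q) (X : ℕ → Ω → Fin q → ℝ)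
    (hmeas : ∀ i, Measurable (X i))
    (hid : ∀ i, IdentDistrib (X i) (X 0) μ μ)
    (hindep : iIndepFun X μ)
    (hcube : ∀ i ω, X i ω ∈ Set.Icc (0 : Fin q → ℝ) 1)
    (f : (Fin q → ℝ) → ℝ) (hf : Measurable f)
    (hfbound : ∃ a b : ℝ, 0 < a ∧ ∀ t ∈ Set.Icc (0 : Fin q → ℝ) 1, a ≤ f t ∧ f t ≤ b)
    (hdens : Measure.map (X 0) μ
      = (volume.restrict (Set.Icc (0 : Fin q → ℝ) 1)).withDensity
          fun t => ENNReal.ofReal (f t))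
    (h : ℕ → ℝ) (hpos : ∀ n, 0 < h n) (hh0 : Tendsto h atTop (nhds 0))
    (hlog : Tendsto (fun n : ℕ => Real.log n / ((n : ℝ) * h n ^ q)) atTop (nhds 0))
    (d : ℝ) (hd : 0 < d) :
    (∀ᵐ ω ∂μ, Tendsto
      (fun n : ℕ =>
        (⨆ a ∈ {a : Fin q → ℝ | ∀ r, 0 ≤ a r ∧ a r + d * h n ≤ 1},
          |(((Finset.range n).filter
              (fun i => X i ω ∈ Set.Icc a fun r => a r + d * h n)).card : ℝ) / n
            - (μ {ω' | X 0 ω' ∈ Set.Icc a fun r => a r + d * h n}).toReal|) / h n ^ q)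
      atTop (nhds 0)) ∧
    ∃ dn : ℕ → ℕ, (∃ κ₁ κ₂ : ℝ, 0 < κ₁ ∧ 0 < κ₂ ∧ ∀ᶠ n : ℕ in atTop,
        κ₁ * ((n : ℝ) * h n ^ q) ≤ (dn n : ℝ) ∧ (dn n : ℝ) ≤ κ₂ * ((n : ℝ) * h n ^ q)) ∧
      Tendsto
        (fun n : ℕ => μ {ω | ∀ a : Fin q → ℝ, (∀ r, 0 ≤ a r ∧ a r + d * h n ≤ 1) →
          dn n ≤ ((Finset.range n).filter
            (fun i => X i ω ∈ Set.Icc a fun r => a r + d * h n)).card})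
        atTop (nhds 1) := by
  obtain ⟨af, b, haf, hab⟩ := hfbound
  have h0mem : (0 : Fin q → ℝ) ∈ Set.Icc (0 : Fin q → ℝ) 1 := ⟨le_refl _, zero_le_one⟩
  have hb : 0 < b := lt_of_lt_of_le haf (le_trans (hab 0 h0mem).1 (hab 0 h0mem).2)
  set U1 : Set (Fin q → ℝ) := Set.Icc 0 1 with hU1
  haveI hprob : IsProbabilityMeasure (Measure.map (X 0) μ) :=
    Measure.isProbabilityMeasure_map (hmeas 0).aemeasurable
  set ν := Measure.map (X 0) μ with hνdef
  have hν_apply : ∀ C : Set (Fin q → ℝ), MeasurableSet C →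
      ν C = ∫⁻ t in C ∩ U1, ENNReal.ofReal (f t) ∂volume := by
    intro C hC
    rw [hdens, withDensity_apply _ hC, Measure.restrict_restrict hC]
  have hνup : ∀ C : Set (Fin q → ℝ), MeasurableSet C →
      ν C ≤ ENNReal.ofReal b * volume (C ∩ U1) := by
    intro C hC
    rw [hν_apply C hC]
    calc ∫⁻ t in C ∩ U1, ENNReal.ofReal (f t) ∂volume
        ≤ ∫⁻ _ in C ∩ U1, ENNReal.ofReal b ∂volume := by
          apply setLIntegral_mono measurable_const
          intro x hx
          exact ENNReal.ofReal_le_ofReal (hab x hx.2).2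
      _ = ENNReal.ofReal b * volume (C ∩ U1) := by
          rw [setLIntegral_const]
  have hνlow : ∀ C : Set (Fin q → ℝ), MeasurableSet C → C ⊆ U1 →
      ENNReal.ofReal af * volume C ≤ ν C := by
    intro C hC hCU
    rw [hν_apply C hC, Set.inter_eq_self_of_subset_left hCU]
    calc ENNReal.ofReal af * volume C = ∫⁻ _ in C, ENNReal.ofReal af ∂volume := by
          rw [setLIntegral_const]
      _ ≤ ∫⁻ t in C, ENNReal.ofReal (f t) ∂volume := by
          apply setLIntegral_mono hf.ennreal_ofReal
          intro x hx
          exact ENNReal.ofReal_le_ofReal (hab x (hCU hx)).1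
  have hμX : ∀ (i : ℕ) (C : Set (Fin q → ℝ)), MeasurableSet C →
      μ {ω | X i ω ∈ C} = ν C := by
    intro i C hC
    have : μ {ω | X i ω ∈ C} = Measure.map (X i) μ C := by
      rw [Measure.map_apply (hmeas i) hC]; rfl
    rw [this, (hid i).map_eq]
  have hcnt_sum : ∀ (n : ℕ) (ω : Ω) (C : Set (Fin q → ℝ)),
      (((Finset.range n).filter (fun i => X i ω ∈ C)).card : ℝ)
        = ∑ i ∈ Finset.range n, (if X i ω ∈ C then (1:ℝ) else 0) := by
    intro n ω C
    rw [Finset.card_filter]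
    push_cast
    rfl
  -- volume of cubes
  have hvolcube : ∀ (a : Fin q → ℝ) (l : ℝ), 0 ≤ l →
      volume (Set.Icc a (fun r => a r + l)) = ENNReal.ofReal (l ^ q) := by
    intro a l hl
    rw [Real.volume_Icc_pi]
    simp only [add_sub_cancel_left]
    rw [Finset.prod_const, ← ENNReal.ofReal_pow hl]
    congr 1
    simp
  have tail : ∀ (n : ℕ) (C : Set (Fin q → ℝ)), MeasurableSet C → ∀ t s : ℝ, 0 ≤ s → s ≤ 1 →
      (μ {ω | (n:ℝ) * ((ν C).toReal + t) ≤ (((Finset.range n).filter (fun i => X i ω ∈ C)).card : ℝ)}).toReal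
        ≤ exp ((n:ℝ) * ((ν C).toReal * s^2 - s*t)) ∧
      (μ {ω | (((Finset.range n).filter (fun i => X i ω ∈ C)).card : ℝ) ≤ (n:ℝ) * ((ν C).toReal - t)}).toReal
        ≤ exp ((n:ℝ) * ((ν C).toReal * s^2 - s*t)) := by
    intro n C hC t s hs0 hs1
    set Y : ℕ → Ω → ℝ := fun i ω => if X i ω ∈ C then 1 else 0 with hY
    have hYm : ∀ i, Measurable (Y i) := fun i =>
      Measurable.ite ((hmeas i) hC) measurable_const measurable_const
    have hYind : iIndepFun Y μ := by
      have := hindep.comp (fun _ => fun x : Fin q → ℝ => if x ∈ C then (1:ℝ) else 0)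
        (fun _ => Measurable.ite hC measurable_const measurable_const)
      exact this
    have hY01 : ∀ i ω, Y i ω = 0 ∨ Y i ω = 1 := by
      intro i ω; by_cases hx : X i ω ∈ C <;> simp [hY, hx]
    have hYint : ∀ i, ∫ ω, Y i ω ∂μ = (ν C).toReal := by
      intro i
      calc ∫ ω, Y i ω ∂μ = ∫ ω, Set.indicator (X i ⁻¹' C) (fun _ => (1:ℝ)) ω ∂μ := by
            apply integral_congr_ae; filter_upwards with ω
            by_cases hx : X i ω ∈ C <;> simp [hY, Set.indicator_apply, hx]
        _ = (μ (X i ⁻¹' C)).toReal • (1:ℝ) := integral_indicator_const _ ((hmeas i) hC)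
        _ = (ν C).toReal := by rw [smul_eq_mul, mul_one]; exact congrArg ENNReal.toReal (hμX i C hC)
    have hp1 : (ν C).toReal ≤ 1 := by
      have h1 : ν C ≤ 1 := prob_le_one
      calc (ν C).toReal ≤ (1 : ℝ≥0∞).toReal := ENNReal.toReal_mono (by norm_num) h1
        _ = 1 := by simp
    have hset1 : {ω | (n:ℝ) * ((ν C).toReal + t) ≤ (((Finset.range n).filter (fun i => X i ω ∈ C)).card : ℝ)}
        = {ω | (n:ℝ) * ((ν C).toReal + t) ≤ ∑ i ∈ Finset.range n, Y i ω} := by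
      ext ω; rw [Set.mem_setOf_eq, Set.mem_setOf_eq, hcnt_sum n ω C]
    have hset2 : {ω | (((Finset.range n).filter (fun i => X i ω ∈ C)).card : ℝ) ≤ (n:ℝ) * ((ν C).toReal - t)}
        = {ω | ∑ i ∈ Finset.range n, Y i ω ≤ (n:ℝ) * ((ν C).toReal - t)} := by
      ext ω; rw [Set.mem_setOf_eq, Set.mem_setOf_eq, hcnt_sum n ω C]
    rw [hset1, hset2]
    exact bernoulli_tails μ n Y hYm hYind hY01 ((ν C).toReal) hYint ENNReal.toReal_nonneg hp1 t s hs0 hs1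
  have hhq : ∀ n, 0 < h n ^ q := fun n => pow_pos (hpos n) q
  have main : ∀ ε : ℝ, 0 < ε → ∀ᵐ ω ∂μ, ∀ᶠ n in atTop,
      ∀ a : Fin q → ℝ, (∀ r, 0 ≤ a r ∧ a r + d * h n ≤ 1) →
        |(((Finset.range n).filter (fun i => X i ω ∈ Set.Icc a fun r => a r + d * h n)).card : ℝ) / n
          - (ν (Set.Icc a fun r => a r + d * h n)).toReal| ≤ ε * h n ^ q := by
    intro ε hε
    obtain ⟨η, hη0, hηd, hηgap⟩ : ∃ η : ℝ, 0 < η ∧ η ≤ d ∧ b * ((d+η)^q - (d-η)^q) ≤ ε/2 := by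
      have hcont : Continuous (fun η : ℝ => b * ((d+η)^q - (d-η)^q)) :=
        continuous_const.mul (((continuous_const.add continuous_id).pow q).sub
          ((continuous_const.sub continuous_id).pow q))
      have h0 : Tendsto (fun η : ℝ => b * ((d+η)^q - (d-η)^q)) (nhds 0) (nhds 0) := by
        have h1 := hcont.tendsto 0
        simpa using h1
      have hev := h0.eventually_lt_const (show (0:ℝ) < ε/2 by linarith)
      rw [Metric.eventually_nhds_iff] at hev
      obtain ⟨δ, hδ0, hδ⟩ := hev
      refine ⟨min (δ/2) d, by positivity, min_le_right _ _, ?_⟩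
      refine (hδ (y := min (δ/2) d) ?_).le
      rw [Real.dist_eq, sub_zero, abs_of_pos (by positivity)]
      calc min (δ/2) d ≤ δ/2 := min_le_left _ _
        _ < δ := by linarith
    set B := b * (2*d)^q with hB
    have hB0 : 0 < B := by positivity
    set s := min 1 (ε/(4*B)) with hsdef
    have hs0 : 0 < s := lt_min one_pos (by positivity)
    have hs1 : s ≤ 1 := min_le_left _ _
    have hsB : B * s ≤ ε/4 := by
      have h1 : s ≤ ε/(4*B) := min_le_right _ _
      calc B * s ≤ B * (ε/(4*B)) := by nlinarith
        _ = ε/4 := by field_simp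
    set c := s * ε / 4 with hcdef
    have hc0 : 0 < c := by positivity
    set M : ℕ → ℕ := fun n => ⌈1/(η * h n)⌉₊ with hM
    set aG : (n : ℕ) → (Fin q → Fin (M n + 1)) → (Fin q → ℝ) :=
      fun n g r => ((g r : ℕ) : ℝ) * (η * h n) with haG
    set Ucube : (n : ℕ) → (Fin q → Fin (M n + 1)) → Set (Fin q → ℝ) :=
      fun n g => Set.Icc (aG n g) (fun r => aG n g r + (d+η) * h n) with hUc
    set Lcube : (n : ℕ) → (Fin q → Fin (M n + 1)) → Set (Fin q → ℝ) :=
      fun n g => Set.Icc (fun r => aG n g r + η * h n) (fun r => aG n g r + d * h n) with hLc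
    set cnt : ℕ → Ω → Set (Fin q → ℝ) → ℝ :=
      fun n ω C => (((Finset.range n).filter (fun i => X i ω ∈ C)).card : ℝ) with hcntdef
    set tn : ℕ → ℝ := fun n => ε/2 * h n ^ q with htn
    set Bad : ℕ → Set Ω := fun n => ⋃ g : Fin q → Fin (M n + 1),
      ({ω | (n:ℝ) * ((ν (Ucube n g)).toReal + tn n) ≤ cnt n ω (Ucube n g)} ∪
       {ω | cnt n ω (Ucube n g) ≤ (n:ℝ) * ((ν (Ucube n g)).toReal - tn n)} ∪
       {ω | (n:ℝ) * ((ν (Lcube n g)).toReal + tn n) ≤ cnt n ω (Lcube n g)} ∪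
       {ω | cnt n ω (Lcube n g) ≤ (n:ℝ) * ((ν (Lcube n g)).toReal - tn n)}) with hBad
    have hUcmeas : ∀ n g, MeasurableSet (Ucube n g) := fun n g => measurableSet_Icc
    have hLcmeas : ∀ n g, MeasurableSet (Lcube n g) := fun n g => measurableSet_Icc
    have hLsubU : ∀ n g, Lcube n g ⊆ Ucube n g := by
      intro n g
      apply Set.Icc_subset_Icc
      · intro r
        have h1 := mul_pos hη0 (hpos n)
        dsimp only
        linarith
      · intro r
        have h1 := mul_pos hη0 (hpos n)
        have h2 : (d+η) * h n = d * h n + η * h n := by ring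
        dsimp only
        linarith
    have hUvol : ∀ n g, volume (Ucube n g) = ENNReal.ofReal (((d+η) * h n)^q) := by
      intro n g
      exact hvolcube _ _ (mul_nonneg (by linarith) (hpos n).le)
    have hLvol : ∀ n g, volume (Lcube n g) = ENNReal.ofReal (((d-η) * h n)^q) := by
      intro n g
      have harg : (fun r => aG n g r + d * h n) = (fun r => (aG n g r + η * h n) + (d-η) * h n) := by
        funext r; ring
      have hEq : Lcube n g = Set.Icc (fun r => aG n g r + η * h n)
          (fun r => (aG n g r + η * h n) + (d-η) * h n) := by
        simp only [hLc]
        rw [harg]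
      rw [hEq]
      exact hvolcube _ _ (mul_nonneg (by linarith) (hpos n).le)
    have hPB : ∀ n g, (ν (Ucube n g)).toReal ≤ B * h n ^ q ∧ (ν (Lcube n g)).toReal ≤ B * h n ^ q := by
      intro n g
      have hU : ν (Ucube n g) ≤ ENNReal.ofReal (B * h n ^ q) := by
        calc ν (Ucube n g) ≤ ENNReal.ofReal b * volume (Ucube n g ∩ U1) := hνup _ (hUcmeas n g)
          _ ≤ ENNReal.ofReal b * volume (Ucube n g) :=
              mul_le_mul_right (measure_mono Set.inter_subset_left) _
          _ = ENNReal.ofReal b * ENNReal.ofReal (((d+η) * h n) ^ q) := by rw [hUvol n g]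
          _ = ENNReal.ofReal (b * ((d+η) * h n) ^ q) := (ENNReal.ofReal_mul hb.le).symm
          _ ≤ ENNReal.ofReal (B * h n ^ q) := by
              apply ENNReal.ofReal_le_ofReal
              rw [mul_pow, hB]
              have h2 : (d+η)^q ≤ (2*d)^q := pow_le_pow_left₀ (by positivity) (by linarith) q
              calc b * ((d + η) ^ q * h n ^ q) ≤ b * ((2 * d) ^ q * h n ^ q) := by
                    exact mul_le_mul_of_nonneg_left
                      (mul_le_mul_of_nonneg_right h2 (hhq n).le) hb.le
                _ = b * (2 * d) ^ q * h n ^ q := by ring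
      have hU' : (ν (Ucube n g)).toReal ≤ B * h n ^ q := by
        calc (ν (Ucube n g)).toReal ≤ (ENNReal.ofReal (B * h n ^ q)).toReal :=
            ENNReal.toReal_mono ENNReal.ofReal_ne_top hU
          _ = B * h n ^ q := ENNReal.toReal_ofReal (mul_nonneg hB0.le (hhq n).le)
      refine ⟨hU', le_trans ?_ hU'⟩
      exact ENNReal.toReal_mono (measure_ne_top _ _) (measure_mono (hLsubU n g))
    have hevb : ∀ (n : ℕ) (C : Set (Fin q → ℝ)), MeasurableSet C → (ν C).toReal ≤ B * h n ^ q →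
        μ {ω | (n:ℝ) * ((ν C).toReal + tn n) ≤ cnt n ω C}
          ≤ ENNReal.ofReal (exp (-(c * ((n:ℝ) * h n ^ q)))) ∧
        μ {ω | cnt n ω C ≤ (n:ℝ) * ((ν C).toReal - tn n)}
          ≤ ENNReal.ofReal (exp (-(c * ((n:ℝ) * h n ^ q)))) := by
      intro n C hC hPle
      obtain ⟨T1, T2⟩ := tail n C hC (tn n) s hs0.le hs1
      have hexp : exp ((n:ℝ) * ((ν C).toReal * s^2 - s * tn n))
          ≤ exp (-(c * ((n:ℝ) * h n ^ q))) := by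
        apply exp_le_exp.2
        have key : (ν C).toReal * s^2 - s * tn n ≤ -(c * h n ^ q) := by
          have e1 : (ν C).toReal * s^2 ≤ (B * h n ^ q) * s^2 :=
            mul_le_mul_of_nonneg_right hPle (sq_nonneg s)
          have e3 : (B*s) * (s * h n ^ q) ≤ (ε/4) * (s * h n ^ q) :=
            mul_le_mul_of_nonneg_right hsB (mul_nonneg hs0.le (hhq n).le)
          have e4 : s * tn n = (ε/2) * (s * h n ^ q) := by simp only [htn]; ring
          have e5 : c * h n ^ q = (ε/4) * (s * h n ^ q) := by simp only [hcdef]; ring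
          nlinarith [hhq n, hs0]
        calc (n:ℝ) * ((ν C).toReal * s^2 - s * tn n) ≤ (n:ℝ) * (-(c * h n ^ q)) :=
            mul_le_mul_of_nonneg_left key (Nat.cast_nonneg n)
          _ = -(c * ((n:ℝ) * h n ^ q)) := by ring
      constructor
      · rw [ENNReal.le_ofReal_iff_toReal_le (measure_ne_top μ _) (exp_pos _).le]
        exact le_trans T1 hexp
      · rw [ENNReal.le_ofReal_iff_toReal_le (measure_ne_top μ _) (exp_pos _).le]
        exact le_trans T2 hexp
    have hBadBound : ∀ n, μ (Bad n) ≤ ((M n + 1 : ℕ) : ℝ≥0∞) ^ q *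
        (4 * ENNReal.ofReal (exp (-(c * ((n:ℝ) * h n ^ q))))) := by
      intro n
      have hone : ∀ g : Fin q → Fin (M n + 1),
          μ ({ω | (n:ℝ) * ((ν (Ucube n g)).toReal + tn n) ≤ cnt n ω (Ucube n g)} ∪
             {ω | cnt n ω (Ucube n g) ≤ (n:ℝ) * ((ν (Ucube n g)).toReal - tn n)} ∪
             {ω | (n:ℝ) * ((ν (Lcube n g)).toReal + tn n) ≤ cnt n ω (Lcube n g)} ∪
             {ω | cnt n ω (Lcube n g) ≤ (n:ℝ) * ((ν (Lcube n g)).toReal - tn n)})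
            ≤ 4 * ENNReal.ofReal (exp (-(c * ((n:ℝ) * h n ^ q)))) := by
        intro g
        obtain ⟨u1, u2⟩ := hevb n (Ucube n g) (hUcmeas n g) (hPB n g).1
        obtain ⟨l1, l2⟩ := hevb n (Lcube n g) (hLcmeas n g) (hPB n g).2
        refine le_trans (measure_union_le _ _) (le_trans (add_le_add (le_trans
          (measure_union_le _ _) (add_le_add (le_trans (measure_union_le _ _)
          (add_le_add u1 u2)) l1)) l2) (le_of_eq ?_))
        ring
      calc μ (Bad n) ≤ ∑ g : Fin q → Fin (M n + 1),
          μ ({ω | (n:ℝ) * ((ν (Ucube n g)).toReal + tn n) ≤ cnt n ω (Ucube n g)} ∪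
             {ω | cnt n ω (Ucube n g) ≤ (n:ℝ) * ((ν (Ucube n g)).toReal - tn n)} ∪
             {ω | (n:ℝ) * ((ν (Lcube n g)).toReal + tn n) ≤ cnt n ω (Lcube n g)} ∪
             {ω | cnt n ω (Lcube n g) ≤ (n:ℝ) * ((ν (Lcube n g)).toReal - tn n)}) := by
            rw [hBad]
            exact measure_iUnion_fintype_le _ _
        _ ≤ ∑ _g : Fin q → Fin (M n + 1), 4 * ENNReal.ofReal (exp (-(c * ((n:ℝ) * h n ^ q)))) :=
            Finset.sum_le_sum (fun g _ => hone g)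
        _ = ((M n + 1 : ℕ) : ℝ≥0∞) ^ q * (4 * ENNReal.ofReal (exp (-(c * ((n:ℝ) * h n ^ q))))) := by
            rw [Finset.sum_const, nsmul_eq_mul]
            congr 1
            rw [Finset.card_univ, Fintype.card_fun]
            push_cast
            simp
    have ev1 : ∀ᶠ n : ℕ in atTop, h n < 1/η := hh0.eventually_lt_const (by positivity)
    have ev3 : ∀ᶠ n : ℕ in atTop, Real.log n / ((n:ℝ) * h n ^ q) < c/4 :=
      hlog.eventually_lt_const (by positivity)
    have ev5 : ∀ᶠ n : ℕ in atTop, Real.log n / ((n:ℝ) * h n ^ q) < 1 :=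
      hlog.eventually_lt_const one_pos
    have ev4 : ∀ᶠ n : ℕ in atTop, 1 ≤ Real.log n := by
      filter_upwards [eventually_ge_atTop 3] with n hn
      have hn0 : (0:ℝ) < n := by exact_mod_cast Nat.lt_of_lt_of_le (by norm_num) hn
      rw [Real.le_log_iff_exp_le hn0]
      calc exp 1 ≤ 2.7182818286 := Real.exp_one_lt_d9.le
        _ ≤ (3:ℝ) := by norm_num
        _ ≤ n := by exact_mod_cast hn
    have ev6 : ∀ᶠ n : ℕ in atTop, 4 * (3/η)^q ≤ (n:ℝ) :=
      (tendsto_natCast_atTop_atTop (R := ℝ)).eventually_ge_atTop _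
    have hEv : ∀ᶠ n : ℕ in atTop, μ (Bad n) ≤ ENNReal.ofReal (((n:ℝ)^2)⁻¹) := by
      filter_upwards [ev1, ev3, ev5, ev4, ev6, eventually_ge_atTop 3] with n e1 e3 e5 e4 e6 hn3
      have hn0 : (0:ℝ) < n := by exact_mod_cast Nat.lt_of_lt_of_le (by norm_num) hn3
      have hH := hhq n
      have hhn := hpos n
      have hNH : (0:ℝ) < (n:ℝ) * h n ^ q := mul_pos hn0 hH
      have l5 : Real.log n < (n:ℝ) * h n ^ q := by
        have := (div_lt_one hNH).1 e5
        linarith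
      have linv : 1/(h n ^ q) ≤ (n:ℝ) := by
        rw [div_le_iff₀ hH]
        nlinarith
      have hδ : 0 < η * h n := mul_pos hη0 hhn
      have hδ1 : η * h n ≤ 1 := by
        have h7 := mul_lt_mul_of_pos_left e1 hη0
        have h8 : η * (1/η) = 1 := by field_simp
        linarith
      have hMle : ((M n + 1 : ℕ):ℝ) ≤ 3/(η * h n) := by
        have hceil : ((M n : ℕ):ℝ) < 1/(η * h n) + 1 := by
          simp only [hM]
          exact Nat.ceil_lt_add_one (by positivity)
        have hone : (1:ℝ) ≤ 1/(η*h n) := by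
          rw [le_div_iff₀ hδ]; linarith
        have h3δ : 3/(η*h n) = 3*(1/(η*h n)) := by ring
        push_cast
        rw [h3δ]
        linarith
      have lexp : exp (-(c * ((n:ℝ) * h n ^ q))) ≤ ((n:ℝ)^4)⁻¹ := by
        have l3 : 4 * Real.log n ≤ c * ((n:ℝ) * h n ^ q) := by
          have := (div_lt_iff₀ hNH).1 e3
          linarith
        calc exp (-(c * ((n:ℝ) * h n ^ q))) ≤ exp (-(4 * Real.log n)) :=
            exp_le_exp.2 (by linarith)
          _ = ((n:ℝ)^4)⁻¹ := by
            rw [show (4:ℝ) * Real.log n = Real.log ((n:ℝ)^4) by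
              rw [Real.log_pow]; push_cast; ring]
            rw [Real.exp_neg, Real.exp_log (by positivity)]
      refine (hBadBound n).trans ?_
      have hcast : ((M n + 1 : ℕ) : ℝ≥0∞) ^ q * (4 * ENNReal.ofReal (exp (-(c * ((n:ℝ) * h n ^ q)))))
          = ENNReal.ofReal (((M n + 1:ℕ):ℝ)^q * (4 * exp (-(c * ((n:ℝ) * h n ^ q))))) := by
        rw [ENNReal.ofReal_mul (by positivity), ENNReal.ofReal_mul (by norm_num : (0:ℝ) ≤ 4),
          ENNReal.ofReal_pow (by positivity), ENNReal.ofReal_natCast, ENNReal.ofReal_ofNat]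
      rw [hcast]
      apply ENNReal.ofReal_le_ofReal
      have hM3 : ((M n + 1:ℕ):ℝ)^q ≤ (3/η)^q * (1/(h n ^ q)) := by
        have hrw : (3/(η * h n))^q = (3/η)^q * (1/(h n^q)) := by
          rw [div_pow, div_pow, mul_pow]
          field_simp
        rw [← hrw]
        exact pow_le_pow_left₀ (by positivity) hMle q
      have hexp0 : (0:ℝ) < exp (-(c * ((n:ℝ) * h n ^ q))) := exp_pos _
      calc ((M n + 1:ℕ):ℝ)^q * (4 * exp (-(c * ((n:ℝ) * h n ^ q))))
          ≤ ((3/η)^q * (1/(h n^q))) * (4 * ((n:ℝ)^4)⁻¹) := by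
            apply mul_le_mul hM3 (by linarith) (by positivity) (by positivity)
        _ ≤ ((3/η)^q * (n:ℝ)) * (4 * ((n:ℝ)^4)⁻¹) := by
            apply mul_le_mul_of_nonneg_right _ (by positivity)
            apply mul_le_mul_of_nonneg_left linv (by positivity)
        _ = (4*(3/η)^q) * ((n:ℝ)^3)⁻¹ := by
            field_simp
        _ ≤ (n:ℝ) * ((n:ℝ)^3)⁻¹ := mul_le_mul_of_nonneg_right e6 (by positivity)
        _ = ((n:ℝ)^2)⁻¹ := by
            field_simp
    obtain ⟨N0, hN0⟩ := eventually_atTop.1 hEv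
    set N := max N0 1 with hNdef
    have hN1 : 1 ≤ N := le_max_right _ _
    have hNge : ∀ k : ℕ, μ (Bad (k + N)) ≤ ENNReal.ofReal ((((k:ℝ)+1)^2)⁻¹) := by
      intro k
      refine (hN0 (k+N) (le_trans (le_max_left _ _) (Nat.le_add_left N k))).trans
        (ENNReal.ofReal_le_ofReal ?_)
      have hk1 : ((k:ℝ)+1) ≤ ((k+N:ℕ):ℝ) := by
        push_cast
        have : (1:ℝ) ≤ (N:ℝ) := by exact_mod_cast hN1
        linarith
      apply inv_anti₀ (by positivity)
      exact pow_le_pow_left₀ (by positivity) hk1 2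
    have hsummable : Summable (fun k : ℕ => (((k:ℝ)+1)^2)⁻¹) := by
      have h2 : Summable (fun n : ℕ => 1/(n:ℝ)^2) :=
        Real.summable_one_div_nat_pow.2 one_lt_two
      have h3 := (summable_nat_add_iff 1).2 h2
      apply h3.congr
      intro k
      push_cast
      rw [one_div]
    have hsum : ∑' k : ℕ, μ (Bad (k + N)) ≠ ⊤ := by
      refine ne_top_of_le_ne_top ?_ (ENNReal.tsum_le_tsum hNge)
      rw [← ENNReal.ofReal_tsum_of_nonneg (fun k => by positivity) hsummable]
      exact ENNReal.ofReal_ne_top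
    filter_upwards [MeasureTheory.ae_eventually_notMem hsum] with ω hω
    obtain ⟨K, hK⟩ := eventually_atTop.1 hω
    rw [eventually_atTop]
    refine ⟨K + N, fun n hn => ?_⟩
    have hnN : N ≤ n := by omega
    have hωn : ω ∉ Bad n := by
      have := hK (n - N) (by omega)
      rwa [Nat.sub_add_cancel hnN] at this
    intro a ha
    have hn1 : 1 ≤ n := le_trans hN1 hnN
    have hn0 : (0:ℝ) < n := by exact_mod_cast hn1
    have hhn := hpos n
    have hH := hhq n
    have hδ0 : 0 < η * h n := mul_pos hη0 hhn
    have ha1 : ∀ r, a r ≤ 1 := by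
      intro r
      have := (ha r).2
      nlinarith [mul_pos hd hhn]
    have hglt : ∀ r, ⌊a r / (η * h n)⌋₊ < M n + 1 := by
      intro r
      apply Nat.lt_succ_of_le
      calc ⌊a r / (η * h n)⌋₊ ≤ ⌊1 / (η * h n)⌋₊ :=
          Nat.floor_le_floor (by gcongr; exact ha1 r)
        _ ≤ ⌈1 / (η * h n)⌉₊ := Nat.floor_le_ceil _
        _ = M n := rfl
    set g : Fin q → Fin (M n + 1) := fun r => ⟨⌊a r / (η * h n)⌋₊, hglt r⟩ with hgdef
    have haGg : ∀ r, aG n g r = (⌊a r / (η * h n)⌋₊ : ℝ) * (η * h n) := by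
      intro r
      simp [haG, hgdef]
    have hlow : ∀ r, aG n g r ≤ a r := by
      intro r
      rw [haGg r]
      have h1 : (⌊a r / (η * h n)⌋₊ : ℝ) ≤ a r / (η * h n) :=
        Nat.floor_le (div_nonneg (ha r).1 hδ0.le)
      calc (⌊a r / (η * h n)⌋₊ : ℝ) * (η * h n) ≤ (a r / (η * h n)) * (η * h n) :=
          mul_le_mul_of_nonneg_right h1 hδ0.le
        _ = a r := by field_simp
    have hhigh : ∀ r, a r ≤ aG n g r + η * h n := by
      intro r
      rw [haGg r]
      have h2 : a r / (η * h n) < ⌊a r / (η * h n)⌋₊ + 1 := Nat.lt_floor_add_one _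
      have h3 : a r < ((⌊a r / (η * h n)⌋₊ : ℝ) + 1) * (η * h n) := by
        rw [← div_lt_iff₀ hδ0]
        exact h2
      nlinarith
    have hsubL : Lcube n g ⊆ Set.Icc a (fun r => a r + d * h n) := by
      apply Set.Icc_subset_Icc
      · intro r
        dsimp only
        exact hhigh r
      · intro r
        dsimp only
        linarith [hlow r]
    have hsubU : Set.Icc a (fun r => a r + d * h n) ⊆ Ucube n g := by
      apply Set.Icc_subset_Icc
      · intro r
        exact hlow r
      · intro r
        dsimp only
        have := hhigh r
        nlinarith
    have hcnt1 : cnt n ω (Lcube n g) ≤ cnt n ω (Set.Icc a (fun r => a r + d * h n)) := by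
      simp only [hcntdef]
      apply Nat.cast_le.2
      apply Finset.card_le_card
      intro i hi
      simp only [Finset.mem_filter] at hi ⊢
      exact ⟨hi.1, hsubL hi.2⟩
    have hcnt2 : cnt n ω (Set.Icc a (fun r => a r + d * h n)) ≤ cnt n ω (Ucube n g) := by
      simp only [hcntdef]
      apply Nat.cast_le.2
      apply Finset.card_le_card
      intro i hi
      simp only [Finset.mem_filter] at hi ⊢
      exact ⟨hi.1, hsubU hi.2⟩
    have hp1 : (ν (Lcube n g)).toReal ≤ (ν (Set.Icc a (fun r => a r + d * h n))).toReal :=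
      ENNReal.toReal_mono (measure_ne_top _ _) (measure_mono hsubL)
    have hp2 : (ν (Set.Icc a (fun r => a r + d * h n))).toReal ≤ (ν (Ucube n g)).toReal :=
      ENNReal.toReal_mono (measure_ne_top _ _) (measure_mono hsubU)
    have hgap : (ν (Ucube n g)).toReal ≤ (ν (Lcube n g)).toReal + ε/2 * h n ^ q := by
      have hνdiff : ν (Ucube n g \ Lcube n g) ≤ ENNReal.ofReal (ε/2 * h n ^ q) := by
        calc ν (Ucube n g \ Lcube n g)
            ≤ ENNReal.ofReal b * volume ((Ucube n g \ Lcube n g) ∩ U1) :=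
              hνup _ ((hUcmeas n g).diff (hLcmeas n g))
          _ ≤ ENNReal.ofReal b * volume (Ucube n g \ Lcube n g) :=
              mul_le_mul_right (measure_mono Set.inter_subset_left) _
          _ = ENNReal.ofReal b * (volume (Ucube n g) - volume (Lcube n g)) := by
              rw [measure_diff (hLsubU n g) (hLcmeas n g).nullMeasurableSet
                (by rw [hLvol n g]; exact ENNReal.ofReal_ne_top)]
          _ = ENNReal.ofReal b * ENNReal.ofReal (((d+η)*h n)^q - ((d-η)*h n)^q) := by
              rw [hUvol n g, hLvol n g, ENNReal.ofReal_sub _ (pow_nonneg (mul_nonneg (by linarith) hhn.le) q)]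
          _ = ENNReal.ofReal (b * (((d+η)*h n)^q - ((d-η)*h n)^q)) :=
              (ENNReal.ofReal_mul hb.le).symm
          _ ≤ ENNReal.ofReal (ε/2 * h n ^ q) := by
              apply ENNReal.ofReal_le_ofReal
              have hrw : ((d+η)*h n)^q - ((d-η)*h n)^q = ((d+η)^q - (d-η)^q) * h n ^ q := by
                rw [mul_pow, mul_pow]
                ring
              rw [hrw]
              calc b * (((d+η)^q - (d-η)^q) * h n ^ q)
                  = (b * ((d+η)^q - (d-η)^q)) * h n ^ q := by ring
                _ ≤ ε/2 * h n ^ q := mul_le_mul_of_nonneg_right hηgap hH.le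
      have h2 : ν (Ucube n g) ≤ ν (Lcube n g) + ENNReal.ofReal (ε/2 * h n ^ q) := by
        calc ν (Ucube n g) ≤ ν (Lcube n g ∪ (Ucube n g \ Lcube n g)) := by
              apply measure_mono
              intro x hx
              by_cases hxL : x ∈ Lcube n g
              · exact Set.mem_union_left _ hxL
              · exact Set.mem_union_right _ ⟨hx, hxL⟩
          _ ≤ ν (Lcube n g) + ν (Ucube n g \ Lcube n g) := measure_union_le _ _
          _ ≤ ν (Lcube n g) + ENNReal.ofReal (ε/2 * h n ^ q) := add_le_add_right hνdiff _
      calc (ν (Ucube n g)).toReal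
          ≤ (ν (Lcube n g) + ENNReal.ofReal (ε/2 * h n ^ q)).toReal :=
            ENNReal.toReal_mono
              (ENNReal.add_ne_top.2 ⟨measure_ne_top _ _, ENNReal.ofReal_ne_top⟩) h2
        _ = (ν (Lcube n g)).toReal + ε/2 * h n ^ q := by
            rw [ENNReal.toReal_add (measure_ne_top _ _) ENNReal.ofReal_ne_top,
              ENNReal.toReal_ofReal (by positivity)]
    simp only [hBad, Set.mem_iUnion, Set.mem_union, Set.mem_setOf_eq, not_exists, not_or,
      not_le] at hωn
    obtain ⟨⟨⟨w1, w2⟩, w3⟩, w4⟩ := hωn g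
    have b1 : cnt n ω (Set.Icc a (fun r => a r + d * h n))
        < (n:ℝ) * ((ν (Set.Icc a (fun r => a r + d * h n))).toReal + ε * h n ^ q) := by
      calc cnt n ω (Set.Icc a (fun r => a r + d * h n)) ≤ cnt n ω (Ucube n g) := hcnt2
        _ < (n:ℝ) * ((ν (Ucube n g)).toReal + tn n) := w1
        _ ≤ (n:ℝ) * ((ν (Set.Icc a (fun r => a r + d * h n))).toReal + ε * h n ^ q) := by
            apply mul_le_mul_of_nonneg_left _ (Nat.cast_nonneg n)
            simp only [htn]
            linarith
    have b2 : (n:ℝ) * ((ν (Set.Icc a (fun r => a r + d * h n))).toReal - ε * h n ^ q)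
        < cnt n ω (Set.Icc a (fun r => a r + d * h n)) := by
      calc (n:ℝ) * ((ν (Set.Icc a (fun r => a r + d * h n))).toReal - ε * h n ^ q)
          ≤ (n:ℝ) * ((ν (Lcube n g)).toReal - tn n) := by
            apply mul_le_mul_of_nonneg_left _ (Nat.cast_nonneg n)
            simp only [htn]
            linarith
        _ < cnt n ω (Lcube n g) := w4
        _ ≤ cnt n ω (Set.Icc a (fun r => a r + d * h n)) := hcnt1
    have d1 : (ν (Set.Icc a fun r => a r + d * h n)).toReal - ε * h n ^ q
        < cnt n ω (Set.Icc a (fun r => a r + d * h n)) / n := by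
      rw [lt_div_iff₀ hn0]
      calc ((ν (Set.Icc a fun r => a r + d * h n)).toReal - ε * h n ^ q) * n
          = (n:ℝ) * ((ν (Set.Icc a fun r => a r + d * h n)).toReal - ε * h n ^ q) := by ring
        _ < cnt n ω (Set.Icc a (fun r => a r + d * h n)) := b2
    have d2 : cnt n ω (Set.Icc a (fun r => a r + d * h n)) / n
        < (ν (Set.Icc a fun r => a r + d * h n)).toReal + ε * h n ^ q := by
      rw [div_lt_iff₀ hn0]
      calc cnt n ω (Set.Icc a (fun r => a r + d * h n))
          < (n:ℝ) * ((ν (Set.Icc a fun r => a r + d * h n)).toReal + ε * h n ^ q) := b1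
        _ = ((ν (Set.Icc a fun r => a r + d * h n)).toReal + ε * h n ^ q) * n := by ring
    have hceq : (((Finset.range n).filter
        (fun i => X i ω ∈ Set.Icc a fun r => a r + d * h n)).card : ℝ)
        = cnt n ω (Set.Icc a (fun r => a r + d * h n)) := by
      simp only [hcntdef]
      norm_cast
      congr!
    rw [abs_le, hceq]
    constructor
    · linarith
    · linarith
  constructor
  · -- first goal: uniform a.s. rate
    have hae := ae_all_iff.2 (fun k : ℕ => main (1/((k:ℝ)+1)) (by positivity))
    filter_upwards [hae] with ω hω
    rw [Metric.tendsto_atTop]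
    intro ε' hε'
    obtain ⟨k, hk⟩ := exists_nat_one_div_lt hε'
    obtain ⟨N, hN⟩ := eventually_atTop.1 (hω k)
    refine ⟨N, fun n hn => ?_⟩
    have hb1 := hN n hn
    have hnonneg : (0:ℝ) ≤ 1/((k:ℝ)+1) * h n ^ q :=
      mul_nonneg (by positivity) (hhq n).le
    have hsup_le : (⨆ (a : Fin q → ℝ) (_ : ∀ r, 0 ≤ a r ∧ a r + d * h n ≤ 1),
        |(((Finset.range n).filter
            (fun i => X i ω ∈ Set.Icc a fun r => a r + d * h n)).card : ℝ) / n
          - (μ {ω' | X 0 ω' ∈ Set.Icc a fun r => a r + d * h n}).toReal|)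
        ≤ 1/((k:ℝ)+1) * h n ^ q := by
      apply Real.iSup_le _ hnonneg
      intro a
      apply Real.iSup_le _ hnonneg
      intro ha
      rw [hμX 0 _ measurableSet_Icc]
      exact hb1 a ha
    have hsup_nonneg : (0:ℝ) ≤ ⨆ (a : Fin q → ℝ) (_ : ∀ r, 0 ≤ a r ∧ a r + d * h n ≤ 1),
        |(((Finset.range n).filter
            (fun i => X i ω ∈ Set.Icc a fun r => a r + d * h n)).card : ℝ) / n
          - (μ {ω' | X 0 ω' ∈ Set.Icc a fun r => a r + d * h n}).toReal| :=
      Real.iSup_nonneg (fun a => Real.iSup_nonneg (fun _ => abs_nonneg _))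
    rw [Real.dist_eq, sub_zero, abs_of_nonneg (div_nonneg hsup_nonneg (hhq n).le)]
    calc _ ≤ (1/((k:ℝ)+1) * h n ^ q) / h n ^ q := (div_le_div_iff_of_pos_right (hhq n)).2 hsup_le
      _ = 1/((k:ℝ)+1) := by
          rw [mul_div_assoc, div_self (ne_of_gt (hhq n)), mul_one]
      _ < ε' := hk
  · -- second goal
    set c0 := af * d ^ q with hc0def
    have hc00 : 0 < c0 := by positivity
    have hplow : ∀ (n : ℕ) (a : Fin q → ℝ), (∀ r, 0 ≤ a r ∧ a r + d * h n ≤ 1) →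
        c0 * h n ^ q ≤ (ν (Set.Icc a fun r => a r + d * h n)).toReal := by
      intro n a ha
      have hsub : Set.Icc a (fun r => a r + d * h n) ⊆ U1 := by
        apply Set.Icc_subset_Icc
        · intro r; exact (ha r).1
        · intro r; exact (ha r).2
      have hlow := hνlow _ measurableSet_Icc hsub
      rw [hvolcube _ _ (mul_nonneg hd.le (hpos n).le)] at hlow
      have h2 : ENNReal.ofReal (af * (d * h n)^q) ≤ ν (Set.Icc a fun r => a r + d * h n) := by
        rw [ENNReal.ofReal_mul haf.le]
        exact hlow
      calc c0 * h n ^ q = af * (d * h n)^q := by rw [hc0def, mul_pow]; ring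
        _ = (ENNReal.ofReal (af * (d * h n)^q)).toReal :=
            (ENNReal.toReal_ofReal (mul_nonneg haf.le (pow_nonneg (mul_nonneg hd.le (hpos n).le) q))).symm
        _ ≤ (ν (Set.Icc a fun r => a r + d * h n)).toReal :=
            ENNReal.toReal_mono (measure_ne_top _ _) h2
    set dn : ℕ → ℕ := fun n => ⌊(c0/2) * ((n:ℝ) * h n ^ q)⌋₊ with hdndef
    have hLarge : ∀ L : ℝ, ∀ᶠ n : ℕ in atTop, L ≤ (n:ℝ) * h n ^ q := by
      intro L
      have hlogn : Tendsto (fun n : ℕ => Real.log n) atTop atTop :=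
        Real.tendsto_log_atTop.comp tendsto_natCast_atTop_atTop
      filter_upwards [hlog.eventually_lt_const one_pos, hlogn.eventually_ge_atTop L,
        eventually_ge_atTop 1] with n l1 l2 hn1
      have hn0 : (0:ℝ) < n := by exact_mod_cast hn1
      have hNH : (0:ℝ) < (n:ℝ) * h n ^ q := mul_pos hn0 (hhq n)
      have := (div_lt_one hNH).1 l1
      linarith
    refine ⟨dn, ⟨c0/4, c0/2, by positivity, by positivity, ?_⟩, ?_⟩
    · filter_upwards [hLarge (4/c0)] with n hL
      have hNH : (0:ℝ) ≤ (n:ℝ) * h n ^ q := le_trans (by positivity) hL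
      have hx2 : (2:ℝ) ≤ (c0/2) * ((n:ℝ) * h n ^ q) := by
        rw [div_le_iff₀ hc00] at hL
        nlinarith
      constructor
      · have hfl : (c0/2) * ((n:ℝ) * h n ^ q) - 1 ≤ (dn n : ℝ) := by
          simp only [hdndef]
          exact (Nat.sub_one_lt_floor _).le
        nlinarith
      · simp only [hdndef]
        calc ((⌊(c0/2) * ((n:ℝ) * h n ^ q)⌋₊ : ℕ) : ℝ) ≤ (c0/2) * ((n:ℝ) * h n ^ q) :=
            Nat.floor_le (by positivity)
          _ = c0/2 * ((n:ℝ) * h n ^ q) := by ring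
    · -- probability tends to one
      set A : ℕ → Set Ω := fun n => {ω | ∀ a : Fin q → ℝ, (∀ r, 0 ≤ a r ∧ a r + d * h n ≤ 1) →
        |(((Finset.range n).filter
            (fun i => X i ω ∈ Set.Icc a fun r => a r + d * h n)).card : ℝ) / n
          - (ν (Set.Icc a fun r => a r + d * h n)).toReal| ≤ (c0/2) * h n ^ q} with hAdef
      set T : ℕ → Set Ω := fun n => {ω | ∀ a : Fin q → ℝ, (∀ r, 0 ≤ a r ∧ a r + d * h n ≤ 1) →
          dn n ≤ ((Finset.range n).filter
            (fun i => X i ω ∈ Set.Icc a fun r => a r + d * h n)).card} with hTdef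
      have hAT : ∀ n, A n ⊆ T n := by
        intro n ω hω a ha
        rcases Nat.eq_zero_or_pos n with hn0 | hn0
        · subst hn0
          simp [hdndef]
        have hn0' : (0:ℝ) < n := by exact_mod_cast hn0
        have h1 := hω a ha
        have h2 := hplow n a ha
        have h3 := abs_le.1 h1
        set cN := ((Finset.range n).filter
            (fun i => X i ω ∈ Set.Icc a fun r => a r + d * h n)).card with hcN
        have h4 : (c0/2) * h n ^ q ≤ (cN:ℝ) / n := by linarith [h3.1]
        have h5 : (c0/2) * ((n:ℝ) * h n ^ q) ≤ (cN:ℝ) := by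
          have := mul_le_mul_of_nonneg_left h4 hn0'.le
          rw [mul_div_cancel₀ _ (ne_of_gt hn0')] at this
          calc (c0/2) * ((n:ℝ) * h n ^ q) = (n:ℝ) * ((c0/2) * h n ^ q) := by ring
            _ ≤ (cN:ℝ) := this
        have h6 : (dn n : ℝ) ≤ (cN:ℝ) := by
          calc (dn n : ℝ) ≤ (c0/2) * ((n:ℝ) * h n ^ q) := by
                simp only [hdndef]
                exact Nat.floor_le (mul_nonneg (by positivity)
                  (mul_nonneg (Nat.cast_nonneg n) (hhq n).le))
            _ ≤ (cN:ℝ) := h5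
        exact_mod_cast h6
      have hae := main (c0/2) (by positivity)
      set Cm : ℕ → Set Ω := fun m => ⋂ (n : ℕ), ⋂ (_ : m ≤ n), A n with hCmdef
      have hCmono : Monotone Cm := by
        intro m1 m2 hm
        apply Set.iInter₂_mono'
        intro n hn
        exact ⟨n, le_trans hm hn, subset_rfl⟩
      have hCu : μ (⋃ m, Cm m) = 1 := by
        have hmem : ∀ᵐ ω ∂μ, ω ∈ ⋃ m, Cm m := by
          filter_upwards [hae] with ω hω
          obtain ⟨m, hm⟩ := eventually_atTop.1 hω
          refine Set.mem_iUnion.2 ⟨m, ?_⟩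
          refine Set.mem_iInter₂.2 (fun n hn => ?_)
          exact hm n hn
        have hcompl : μ ((⋃ m, Cm m)ᶜ) = 0 := by
          have h2 : (⋃ m, Cm m) ∈ ae μ := by
            rwa [Filter.eventually_iff, Set.setOf_mem_eq] at hmem
          exact mem_ae_iff.1 h2
        refine le_antisymm prob_le_one ?_
        calc (1:ℝ≥0∞) = μ Set.univ := measure_univ.symm
          _ = μ ((⋃ m, Cm m) ∪ (⋃ m, Cm m)ᶜ) := by rw [Set.union_compl_self]
          _ ≤ μ (⋃ m, Cm m) + μ ((⋃ m, Cm m)ᶜ) := measure_union_le _ _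
          _ = μ (⋃ m, Cm m) := by rw [hcompl, add_zero]
      have hiSup : ⨆ m, μ (Cm m) = 1 := by
        rw [← hCu]
        exact (Directed.measure_iUnion hCmono.directed_le).symm
      have hten : Tendsto (fun m => μ (Cm m)) atTop (nhds 1) := by
        rw [← hiSup]
        exact tendsto_atTop_iSup (fun m1 m2 hm => measure_mono (hCmono hm))
      have hCsubT : ∀ n, Cm n ⊆ T n :=
        fun n => subset_trans (Set.iInter₂_subset n le_rfl) (hAT n)
      exact tendsto_of_tendsto_of_tendsto_of_le_of_le hten tendsto_const_nhds
        (fun n => measure_mono (hCsubT n)) (fun n => prob_le_one)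
end

section
/- Let U be the cdf of a nonnegative random variable with U(y) = c y^α (1 + o(1)) as y ↘ 0 for some constants c, α > 0. Let (h_n) be positive bandwidths with h_n → 0 and log(n)/(n h_n^q) → 0, let r_n = (|log(h_n)| / (n h_n^q))^{1/α}, and let (d_{H_n}) be a sequence of natural numbers with d_{H_n}/(n h_n^q) bounded away from zero. Then for all sufficiently large L > 0, (1 − U(L r_n))^{d_{H_n}} = o(h_n^q) as n → ∞. -/
open Filter MeasureTheory

/-- Key tail estimate.  Let `U` be the cdf of a nonnegative random variable with
`U(y) = c y^α (1 + o(1))` as `y ↘ 0` for constants `c, α > 0`.  Let `(h_n)` be positive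
bandwidths with `h_n → 0` and `log(n)/(n h_n^q) → 0`, let
`r_n = (|log h_n| / (n h_n^q))^{1/α}`, and let `(d_{H_n})` be natural numbers with
`d_{H_n}/(n h_n^q)` bounded away from zero.  Then for all sufficiently large `L > 0`,
`(1 − U(L r_n))^{d_{H_n}} = o(h_n^q)` as `n → ∞`. -/
theorem stmt16 (q : ℕ) (hq : 0 < q) (U : ℝ → ℝ) (c α : ℝ) (hc : 0 < c) (hα : 0 < α)
    -- U is a cdf of a nonnegative random variable
    (hUmono : Monotone U) (hU01 : ∀ y, 0 ≤ U y ∧ U y ≤ 1)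
    (hUneg : ∀ y < (0 : ℝ), U y = 0) (hUlim : Tendsto U atTop (nhds 1))
    -- U(y) = c y^α (1 + o(1)) as y ↘ 0
    (hUtail : (fun y : ℝ => U y - c * y ^ α) =o[nhdsWithin 0 (Set.Ioi 0)]
      fun y : ℝ => y ^ α)
    (h : ℕ → ℝ) (hpos : ∀ n, 0 < h n) (hh0 : Tendsto h atTop (nhds 0))
    (hlog : Tendsto (fun n : ℕ => Real.log n / ((n : ℝ) * h n ^ q)) atTop (nhds 0))
    (dH : ℕ → ℕ)
    (hdH : ∃ κ : ℝ, 0 < κ ∧ ∀ᶠ n in atTop, κ ≤ (dH n : ℝ) / ((n : ℝ) * h n ^ q)) :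
    ∃ L₀ : ℝ, 0 < L₀ ∧ ∀ L ≥ L₀,
      Tendsto
        (fun n : ℕ => (1 - U (L * (|Real.log (h n)| / ((n : ℝ) * h n ^ q)) ^ (1 / α))) ^ dH n
          / h n ^ q)
        atTop (nhds 0) := by
  obtain ⟨κ, hκ, hκev⟩ := hdH
  set D : ℕ → ℝ := fun n => (n : ℝ) * h n ^ q with hD
  set x : ℕ → ℝ := fun n => |Real.log (h n)| / D n with hxdef
  -- basic eventual facts
  have ev1 : ∀ᶠ n : ℕ in atTop, 0 < D n := by
    filter_upwards [eventually_ge_atTop 1] with n hn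
    have : (0:ℝ) < n := by exact_mod_cast Nat.lt_of_lt_of_le Nat.zero_lt_one hn
    exact mul_pos this (pow_pos (hpos n) q)
  have ev2 : ∀ᶠ n : ℕ in atTop, h n < 1 := hh0.eventually_lt_const one_pos
  have hDtop : Tendsto D atTop atTop := by
    have evle : ∀ᶠ n : ℕ in atTop, Real.log n ≤ D n := by
      filter_upwards [ev1, hlog.eventually_lt_const one_pos] with n h1 h2
      exact le_of_lt ((div_lt_one h1).mp h2)
    exact tendsto_atTop_mono' atTop evle
      (Real.tendsto_log_atTop.comp tendsto_natCast_atTop_atTop)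
  have ev3 : ∀ᶠ n : ℕ in atTop, |Real.log (h n)| ≤ Real.log n := by
    filter_upwards [ev2, hDtop.eventually_ge_atTop 1, eventually_ge_atTop 1] with n h1 h2 h3
    have hn0 : (0:ℝ) < n := by exact_mod_cast Nat.lt_of_lt_of_le Nat.zero_lt_one h3
    have hpq : h n ^ q ≤ h n := pow_le_of_le_one (hpos n).le h1.le hq.ne'
    have hnh : 1 ≤ (n:ℝ) * h n := le_trans h2 (by
      have := mul_le_mul_of_nonneg_left hpq hn0.le
      simpa [hD] using this)
    have hinv : (h n)⁻¹ ≤ (n:ℝ) := by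
      rw [inv_eq_one_div, div_le_iff₀ (hpos n)]; linarith
    have hlneg : Real.log (h n) < 0 := Real.log_neg (hpos n) h1
    rw [abs_of_neg hlneg, ← Real.log_inv]
    exact Real.log_le_log (inv_pos.mpr (hpos n)) hinv
  have hx0 : Tendsto x atTop (nhds 0) := by
    apply squeeze_zero' (g := fun n : ℕ => Real.log n / D n)
    · refine Eventually.of_forall fun n => div_nonneg (abs_nonneg _) ?_
      exact mul_nonneg (Nat.cast_nonneg n) (pow_nonneg (hpos n).le q)
    · filter_upwards [ev1, ev3] with n h1 h2
      exact div_le_div_of_nonneg_right h2 h1.le |>.trans_eq rfl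
    · exact hlog
  have ev4 : ∀ᶠ n : ℕ in atTop, 0 < x n := by
    filter_upwards [ev1, ev2] with n h1 h2
    have : Real.log (h n) < 0 := Real.log_neg (hpos n) h2
    exact div_pos (abs_pos.mpr this.ne) h1
  have hr0 : Tendsto (fun n => x n ^ (1/α)) atTop (nhds 0) := by
    have := hx0.rpow_const (p := 1/α) (Or.inr (by positivity))
    simpa [Real.zero_rpow (show α⁻¹ ≠ 0 by positivity), one_div] using this
  -- choice of L₀
  set B : ℝ := 2 * ((q:ℝ) + 1) / (c * κ) with hB
  have hB0 : 0 ≤ B := by positivity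
  refine ⟨max 1 (B ^ (1/α)), lt_of_lt_of_le one_pos (le_max_left _ _), ?_⟩
  intro L hL
  have hL1 : (1:ℝ) ≤ L := le_trans (le_max_left _ _) hL
  have hLpos : 0 < L := lt_of_lt_of_le one_pos hL1
  have hLα : B ≤ L ^ α := by
    have h1 : B ^ (1/α) ≤ L := le_trans (le_max_right _ _) hL
    have h2 : (B ^ (1/α)) ^ α ≤ L ^ α :=
      Real.rpow_le_rpow (Real.rpow_nonneg hB0 _) h1 hα.le
    rwa [← Real.rpow_mul hB0, one_div_mul_cancel hα.ne', Real.rpow_one] at h2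
  have hs : (q:ℝ) + 1 ≤ c / 2 * L ^ α * κ := by
    have := (div_le_iff₀ (mul_pos hc hκ)).mp hLα
    nlinarith
  -- tendsto into the within filter, to use the tail estimate
  have hT : Tendsto (fun n => L * x n ^ (1/α)) atTop (nhdsWithin 0 (Set.Ioi 0)) := by
    rw [tendsto_nhdsWithin_iff]
    constructor
    · simpa using tendsto_const_nhds.mul hr0
    · filter_upwards [ev4] with n hn
      exact mul_pos hLpos (Real.rpow_pos_of_pos hn _)
  have htail := hT.eventually (hUtail.def (half_pos hc))
  -- main squeeze
  apply squeeze_zero'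
    (g := h)
  · filter_upwards with n
    have h1 := (hU01 (L * x n ^ (1/α))).2
    exact div_nonneg (pow_nonneg (by linarith) _) (pow_pos (hpos n) q).le
  · filter_upwards [ev1, ev2, ev4, hκev, htail] with n hDn hhn1 hxn hκn htn
    set y : ℝ := L * x n ^ (1/α) with hy
    have hy0 : 0 < y := mul_pos hLpos (Real.rpow_pos_of_pos hxn _)
    have hyα : y ^ α = L ^ α * x n := by
      rw [hy, Real.mul_rpow hLpos.le (Real.rpow_nonneg (le_of_lt hxn) _),
        ← Real.rpow_mul hxn.le, one_div_mul_cancel hα.ne', Real.rpow_one]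
    have hU_lb : c / 2 * (L ^ α * x n) ≤ U y := by
      rw [Real.norm_eq_abs, Real.norm_eq_abs,
        abs_of_nonneg (Real.rpow_nonneg hy0.le α)] at htn
      have := (abs_le.mp htn).1
      rw [hyα] at this
      linarith
    have hd_lb : κ * D n ≤ (dH n : ℝ) := (le_div_iff₀ hDn).mp hκn
    have hDx : x n * D n = |Real.log (h n)| := div_mul_cancel₀ _ hDn.ne'
    have hexp : c / 2 * L ^ α * κ * |Real.log (h n)| ≤ (dH n : ℝ) * U y := by
      have h1 : (dH n : ℝ) * (c / 2 * (L ^ α * x n)) ≤ (dH n : ℝ) * U y :=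
        mul_le_mul_of_nonneg_left hU_lb (Nat.cast_nonneg _)
      have h2 : κ * |Real.log (h n)| ≤ (dH n : ℝ) * x n := by
        calc κ * |Real.log (h n)| = κ * D n * x n := by rw [← hDx]; ring
        _ ≤ (dH n : ℝ) * x n := mul_le_mul_of_nonneg_right hd_lb hxn.le
      nlinarith [mul_le_mul_of_nonneg_left h2 (by positivity : (0:ℝ) ≤ c / 2 * L ^ α)]
    have hUy0 := (hU01 y).1
    have hUy1 := (hU01 y).2
    have hlneg : Real.log (h n) < 0 := Real.log_neg (hpos n) hhn1
    have step1 : (1 - U y) ^ dH n ≤ Real.exp (-(((dH n : ℝ)) * U y)) := by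
      calc (1 - U y) ^ dH n ≤ Real.exp (-(U y)) ^ dH n := by
            apply pow_le_pow_left₀ (by linarith)
            linarith [Real.add_one_le_exp (-(U y))]
        _ = Real.exp (-(((dH n : ℝ)) * U y)) := by
            rw [← Real.exp_nat_mul]; ring_nf
    have step2 : Real.exp (-(((dH n : ℝ)) * U y)) ≤
        Real.exp (Real.log (h n) * (c / 2 * L ^ α * κ)) := by
      apply Real.exp_le_exp.mpr
      rw [abs_of_neg hlneg] at hexp
      nlinarith
    have step3 : Real.exp (Real.log (h n) * (c / 2 * L ^ α * κ)) = h n ^ (c / 2 * L ^ α * κ) :=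
      (Real.rpow_def_of_pos (hpos n) _).symm
    have step4 : h n ^ (c / 2 * L ^ α * κ) ≤ h n ^ ((q:ℝ) + 1) :=
      Real.rpow_le_rpow_of_exponent_ge (hpos n) hhn1.le hs
    have step5 : h n ^ ((q:ℝ) + 1) = h n ^ q * h n := by
      rw [show ((q:ℝ) + 1) = ((q + 1 : ℕ) : ℝ) by push_cast; ring,
        Real.rpow_natCast, pow_succ]
    rw [div_le_iff₀ (pow_pos (hpos n) q)]
    calc (1 - U y) ^ dH n ≤ h n ^ q * h n := by
          rw [← step5]
          exact ((step1.trans step2).trans_eq step3).trans step4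
      _ = h n * h n ^ q := by ring
  · exact hh0
end
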